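/- arXiv:1409.3346 — 4 statements merged into one kernel-verified Lean document; each statement's English description precedes it below -/
import Mathlib

section
/- Let Ω ⊆ ℝⁿ be a domain and let A : Ω → ℝ^{n×n} be a symmetric matrix-valued function that is locally uniformly positive definite on Ω. Let u, v : Ω → ℝ be differentiable with u ≥ 0 and v > 0 on Ω. Then for every x ∈ Ω, L_A(u,v)(x) = R_A(u,v)(x) and L_A(u,v)(x) ≥ 0, where L_A(u,v)(x) := |∇u(x)|_A^p + (p−1)(u(x)/v(x))^p |∇v(x)|_A^p − p (u(x)/v(x))^{p−1} |∇v(x)|_A^{p−2} ⟨A(x)∇v(x), ∇u(x)⟩ and R_A(u,v)(x) := |∇u(x)|_A^p − |∇v(x)|_A^{p−2} ⟨A(x)∇v(x), ∇(u^p/v^{p−1})(x)⟩. -/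
open MeasureTheory Matrix Filter Topology

noncomputable section

variable {n : ℕ}

/-- The quadratic form `⟨A ξ, ξ⟩` associated with a matrix `A`. -/
def matQ (A : Matrix (Fin n) (Fin n) ℝ) (ξ : Fin n → ℝ) : ℝ := A.mulVec ξ ⬝ᵥ ξ

/-- `|ξ|_A := ⟨A ξ, ξ⟩^{1/2}`. -/
def matNorm (A : Matrix (Fin n) (Fin n) ℝ) (ξ : Fin n → ℝ) : ℝ := Real.sqrt (matQ A ξ)

/-- The (classical) gradient of `u : ℝⁿ → ℝ`. -/
def grad (u : (Fin n → ℝ) → ℝ) (x : Fin n → ℝ) : Fin n → ℝ :=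
  fun i => fderiv ℝ u x (Pi.single i 1)

/-- `φ ∈ C_c^∞(Ω)`. -/
def IsTest (Ω : Set (Fin n → ℝ)) (φ : (Fin n → ℝ) → ℝ) : Prop :=
  ContDiff ℝ (⊤ : ℕ∞) φ ∧ HasCompactSupport φ ∧ tsupport φ ⊆ Ω

/-- The functional `Q_{A,V}(φ) = ∫_Ω (|∇φ|_A^p + V |φ|^p)`. -/
def QForm (p : ℝ) (Ω : Set (Fin n → ℝ)) (A : (Fin n → ℝ) → Matrix (Fin n) (Fin n) ℝ)
    (V : (Fin n → ℝ) → ℝ) (φ : (Fin n → ℝ) → ℝ) : ℝ :=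
  ∫ x in Ω, (matNorm (A x) (grad φ x) ^ p + V x * |φ x| ^ p)

/-- `A` is symmetric and locally uniformly positive definite in `Ω`. -/
def LocUnifPD (Ω : Set (Fin n → ℝ)) (A : (Fin n → ℝ) → Matrix (Fin n) (Fin n) ℝ) : Prop :=
  (∀ x ∈ Ω, (A x).IsSymm) ∧
  ∀ K : Set (Fin n → ℝ), K ⊆ Ω → IsCompact K →
    ∃ θ > (0:ℝ), ∀ x ∈ K, ∀ ξ : Fin n → ℝ,
      θ * (ξ ⬝ᵥ ξ) ≤ matQ (A x) ξ ∧ matQ (A x) ξ ≤ θ⁻¹ * (ξ ⬝ᵥ ξ)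

/-- `V ∈ L^∞_loc(Ω)` (measurable and locally bounded). -/
def LinfLoc (Ω : Set (Fin n → ℝ)) (V : (Fin n → ℝ) → ℝ) : Prop :=
  Measurable V ∧
  ∀ K : Set (Fin n → ℝ), K ⊆ Ω → IsCompact K → ∃ C : ℝ, ∀ x ∈ K, |V x| ≤ C

/-- `A` is locally `α`-Hölder continuous in `Ω` (entrywise). -/
def LocHolderMat (Ω : Set (Fin n → ℝ)) (A : (Fin n → ℝ) → Matrix (Fin n) (Fin n) ℝ)
    (α : ℝ) : Prop :=
  ∀ K : Set (Fin n → ℝ), K ⊆ Ω → IsCompact K → ∃ C : ℝ, ∀ x ∈ K, ∀ y ∈ K, ∀ i j,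
    |A x i j - A y i j| ≤ C * dist x y ^ α

/-- `v` is a (weak) supersolution of `Q_{A,V}(u) = 0` in `Ω`. -/
def IsSupersolution (p : ℝ) (Ω : Set (Fin n → ℝ))
    (A : (Fin n → ℝ) → Matrix (Fin n) (Fin n) ℝ) (V : (Fin n → ℝ) → ℝ)
    (v : (Fin n → ℝ) → ℝ) : Prop :=
  ∀ φ : (Fin n → ℝ) → ℝ, IsTest Ω φ → (∀ x, 0 ≤ φ x) →
    0 ≤ ∫ x in Ω, (matNorm (A x) (grad v x) ^ (p - 2) *
          ((A x).mulVec (grad v x) ⬝ᵥ grad φ x) + V x * v x ^ (p - 1) * φ x)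

/-- `v` is a (weak) solution of `Q_{A,V}(u) = 0` in `Ω`. -/
def IsSolution (p : ℝ) (Ω : Set (Fin n → ℝ))
    (A : (Fin n → ℝ) → Matrix (Fin n) (Fin n) ℝ) (V : (Fin n → ℝ) → ℝ)
    (v : (Fin n → ℝ) → ℝ) : Prop :=
  ∀ φ : (Fin n → ℝ) → ℝ, IsTest Ω φ →
    (∫ x in Ω, (matNorm (A x) (grad v x) ^ (p - 2) *
        ((A x).mulVec (grad v x) ⬝ᵥ grad φ x) + V x * v x ^ (p - 1) * φ x)) = 0

/-- `ψ` is a (weak) subsolution of `Q_{A,V}(u) = 0` in `Ω`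
(with the term `V |ψ|^{p-2} ψ`). -/
def IsSubsolution (p : ℝ) (Ω : Set (Fin n → ℝ))
    (A : (Fin n → ℝ) → Matrix (Fin n) (Fin n) ℝ) (V : (Fin n → ℝ) → ℝ)
    (ψ : (Fin n → ℝ) → ℝ) : Prop :=
  ∀ φ : (Fin n → ℝ) → ℝ, IsTest Ω φ → (∀ x, 0 ≤ φ x) →
    (∫ x in Ω, (matNorm (A x) (grad ψ x) ^ (p - 2) *
        ((A x).mulVec (grad ψ x) ⬝ᵥ grad φ x) + V x * |ψ x| ^ (p - 2) * ψ x * φ x)) ≤ 0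

/-- The Picone form `L_A(u,v)(x)`. -/
def PiconeL (p : ℝ) (A : (Fin n → ℝ) → Matrix (Fin n) (Fin n) ℝ)
    (u v : (Fin n → ℝ) → ℝ) (x : Fin n → ℝ) : ℝ :=
  matNorm (A x) (grad u x) ^ p
    + (p - 1) * (u x / v x) ^ p * matNorm (A x) (grad v x) ^ p
    - p * (u x / v x) ^ (p - 1) * matNorm (A x) (grad v x) ^ (p - 2)
        * ((A x).mulVec (grad v x) ⬝ᵥ grad u x)

/-- The Picone form `R_A(u,v)(x)`. -/
def PiconeR (p : ℝ) (A : (Fin n → ℝ) → Matrix (Fin n) (Fin n) ℝ)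
    (u v : (Fin n → ℝ) → ℝ) (x : Fin n → ℝ) : ℝ :=
  matNorm (A x) (grad u x) ^ p
    - matNorm (A x) (grad v x) ^ (p - 2)
        * ((A x).mulVec (grad v x) ⬝ᵥ grad (fun y => u y ^ p / v y ^ (p - 1)) x)

/-- The functional `Q_{A,V}` is nonnegative on `C_c^∞(Ω)`. -/
def QNonneg (p : ℝ) (Ω : Set (Fin n → ℝ)) (A : (Fin n → ℝ) → Matrix (Fin n) (Fin n) ℝ)
    (V : (Fin n → ℝ) → ℝ) : Prop :=
  ∀ φ : (Fin n → ℝ) → ℝ, IsTest Ω φ → 0 ≤ QForm p Ω A V φ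

/-- The functional `Q_{A,V}` is subcritical in `Ω`. -/
def QSubcritical (p : ℝ) (Ω : Set (Fin n → ℝ)) (A : (Fin n → ℝ) → Matrix (Fin n) (Fin n) ℝ)
    (V : (Fin n → ℝ) → ℝ) : Prop :=
  ∃ W : (Fin n → ℝ) → ℝ, ContinuousOn W Ω ∧ (∀ x ∈ Ω, 0 ≤ W x) ∧ (∃ x ∈ Ω, W x ≠ 0) ∧
    ∀ φ : (Fin n → ℝ) → ℝ, IsTest Ω φ →
      (∫ x in Ω, W x * |φ x| ^ p) ≤ QForm p Ω A V φ

/-- The functional `Q_{A,V}` is critical in `Ω`. -/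
def QCritical (p : ℝ) (Ω : Set (Fin n → ℝ)) (A : (Fin n → ℝ) → Matrix (Fin n) (Fin n) ℝ)
    (V : (Fin n → ℝ) → ℝ) : Prop :=
  QNonneg p Ω A V ∧ ¬ QSubcritical p Ω A V

/-- The functional `Q_{A,V}` is supercritical in `Ω` (not nonnegative). -/
def QSupercritical (p : ℝ) (Ω : Set (Fin n → ℝ)) (A : (Fin n → ℝ) → Matrix (Fin n) (Fin n) ℝ)
    (V : (Fin n → ℝ) → ℝ) : Prop :=
  ¬ QNonneg p Ω A V

/-- A null sequence for `Q_{A,V}` in `Ω`. -/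
def IsNullSeq (p : ℝ) (Ω : Set (Fin n → ℝ)) (A : (Fin n → ℝ) → Matrix (Fin n) (Fin n) ℝ)
    (V : (Fin n → ℝ) → ℝ) (φs : ℕ → (Fin n → ℝ) → ℝ) : Prop :=
  (∀ k, IsTest Ω (φs k) ∧ ∀ x, 0 ≤ φs k x) ∧
  (∃ B : Set (Fin n → ℝ), IsOpen B ∧ IsCompact (closure B) ∧ closure B ⊆ Ω ∧
      ∀ k, (∫ x in B, |φs k x| ^ p) = 1) ∧
  Tendsto (fun k => QForm p Ω A V (φs k)) atTop (nhds 0)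

/-- A ground state of `Q_{A,V}` in `Ω`: a positive function which is an `L^p_loc` limit of
a null sequence. -/
def IsGroundState (p : ℝ) (Ω : Set (Fin n → ℝ)) (A : (Fin n → ℝ) → Matrix (Fin n) (Fin n) ℝ)
    (V : (Fin n → ℝ) → ℝ) (φ : (Fin n → ℝ) → ℝ) : Prop :=
  (∀ x ∈ Ω, 0 < φ x) ∧
  ∃ φs : ℕ → (Fin n → ℝ) → ℝ, IsNullSeq p Ω A V φs ∧
    ∀ K : Set (Fin n → ℝ), K ⊆ Ω → IsCompact K →
      Tendsto (fun k => ∫ x in K, |φs k x - φ x| ^ p) atTop (nhds 0)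


/-- Entrywise measurability of a matrix-valued map. -/
def MeasurableMat (A : (Fin n → ℝ) → Matrix (Fin n) (Fin n) ℝ) : Prop :=
  ∀ i j, Measurable fun x => A x i j
private lemma picone_dot_self_nonneg {m : ℕ} (ξ : Fin m → ℝ) : 0 ≤ ξ ⬝ᵥ ξ :=
  Finset.sum_nonneg fun _ _ => mul_self_nonneg _

private lemma picone_mulVec_symm {m : ℕ} {M : Matrix (Fin m) (Fin m) ℝ} (hM : M.IsSymm)
    (x y : Fin m → ℝ) : M.mulVec x ⬝ᵥ y = M.mulVec y ⬝ᵥ x := by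
  rw [dotProduct_comm, Matrix.dotProduct_mulVec, ← Matrix.mulVec_transpose, hM]

private lemma picone_matQ_expand {m : ℕ} {M : Matrix (Fin m) (Fin m) ℝ} (hM : M.IsSymm)
    (x y : Fin m → ℝ) (a c : ℝ) :
    matQ M (a • x + c • y)
      = a ^ 2 * matQ M x + 2 * a * c * (M.mulVec y ⬝ᵥ x) + c ^ 2 * matQ M y := by
  have h := picone_mulVec_symm hM x y
  simp only [matQ, Matrix.mulVec_add, Matrix.mulVec_smul, add_dotProduct,
    smul_dotProduct, dotProduct_add, dotProduct_smul, smul_eq_mul]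
  rw [h]; ring

private lemma picone_matQ_cs {m : ℕ} {M : Matrix (Fin m) (Fin m) ℝ} (hM : M.IsSymm)
    (hpos : ∀ ξ, 0 ≤ matQ M ξ) (x y : Fin m → ℝ) (hy : 0 < matQ M y) :
    M.mulVec y ⬝ᵥ x ≤ Real.sqrt (matQ M x) * Real.sqrt (matQ M y) := by
  set s := M.mulVec y ⬝ᵥ x with hs
  have h := hpos (matQ M y • x + (-s) • y)
  rw [picone_matQ_expand hM] at h
  have hsq : s ^ 2 ≤ matQ M x * matQ M y := by nlinarith [h, hy]
  calc s ≤ |s| := le_abs_self s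
    _ = Real.sqrt (s ^ 2) := (Real.sqrt_sq_eq_abs s).symm
    _ ≤ Real.sqrt (matQ M x * matQ M y) := Real.sqrt_le_sqrt hsq
    _ = _ := Real.sqrt_mul (hpos x) _

/-- **Picone identity** for the `(p,A)`-Laplacian: for differentiable `u ≥ 0`, `v > 0` on a
domain `Ω`, the forms `L_A(u,v)` and `R_A(u,v)` coincide and are nonnegative on `Ω`. -/
theorem picone_identity
    (n : ℕ) (hn : 2 ≤ n) (p : ℝ) (hp : 1 < p)
    (Ω : Set (Fin n → ℝ)) (hΩo : IsOpen Ω) (hΩc : IsConnected Ω)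
    (A : (Fin n → ℝ) → Matrix (Fin n) (Fin n) ℝ) (hA : LocUnifPD Ω A)
    (u v : (Fin n → ℝ) → ℝ)
    (hu : ∀ x ∈ Ω, DifferentiableAt ℝ u x)
    (hv : ∀ x ∈ Ω, DifferentiableAt ℝ v x)
    (hu0 : ∀ x ∈ Ω, 0 ≤ u x) (hv0 : ∀ x ∈ Ω, 0 < v x) :
    ∀ x ∈ Ω, PiconeL p A u v x = PiconeR p A u v x ∧ 0 ≤ PiconeL p A u v x := by
  intro x hx
  obtain ⟨θ, hθ, hbd⟩ := hA.2 {x} (Set.singleton_subset_iff.2 hx) isCompact_singleton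
  have hsym : (A x).IsSymm := hA.1 x hx
  have hpos : ∀ ξ : Fin n → ℝ, 0 ≤ matQ (A x) ξ := fun ξ =>
    le_trans (mul_nonneg hθ.le (picone_dot_self_nonneg ξ)) (hbd x rfl ξ).1
  have hvx : 0 < v x := hv0 x hx
  have hux : 0 ≤ u x := hu0 x hx
  have hp0 : (0 : ℝ) < p := by linarith
  have hp1 : p - 1 ≠ 0 := sub_ne_zero.2 (ne_of_gt hp)
  -- derivative of `w = u^p / v^(p-1)`
  have hu' : HasFDerivAt u (fderiv ℝ u x) x := (hu x hx).hasFDerivAt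
  have hv' : HasFDerivAt v (fderiv ℝ v x) x := (hv x hx).hasFDerivAt
  have hf : HasFDerivAt (fun y => u y ^ p) ((p * u x ^ (p - 1)) • fderiv ℝ u x) x :=
    hu'.rpow_const (Or.inr hp.le)
  have hg : HasFDerivAt (fun y => v y ^ (p - 1)) (((p - 1) * v x ^ (p - 1 - 1)) • fderiv ℝ v x)
      x := hv'.rpow_const (Or.inl hvx.ne')
  have hgne : v x ^ (p - 1) ≠ 0 := (Real.rpow_pos_of_pos hvx _).ne'
  have hinv : HasFDerivAt (fun y => (v y ^ (p - 1))⁻¹)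
      ((-((v x ^ (p - 1)) ^ 2)⁻¹) • (((p - 1) * v x ^ (p - 1 - 1)) • fderiv ℝ v x)) x :=
    (hasDerivAt_inv hgne).comp_hasFDerivAt x hg
  have hw : HasFDerivAt (fun y => u y ^ p / v y ^ (p - 1))
      ((u x ^ p) • ((-((v x ^ (p - 1)) ^ 2)⁻¹) • (((p - 1) * v x ^ (p - 1 - 1)) • fderiv ℝ v x))
        + ((v x ^ (p - 1))⁻¹) • ((p * u x ^ (p - 1)) • fderiv ℝ u x)) x := by
    simp only [div_eq_mul_inv]
    exact hf.mul hinv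
  have hgradw : grad (fun y => u y ^ p / v y ^ (p - 1)) x
      = fun i => (p * (u x / v x) ^ (p - 1)) * grad u x i
          + (-((p - 1) * (u x / v x) ^ p)) * grad v x i := by
    funext i
    have hfd : fderiv ℝ (fun y => u y ^ p / v y ^ (p - 1)) x = _ := hw.fderiv
    simp only [grad, hfd, ContinuousLinearMap.add_apply, ContinuousLinearMap.smul_apply,
      smul_eq_mul]
    have h1 : (u x / v x) ^ (p - 1) = u x ^ (p - 1) / v x ^ (p - 1) :=
      Real.div_rpow hux hvx.le _
    have h2 : (u x / v x) ^ p = u x ^ p / v x ^ p := Real.div_rpow hux hvx.le _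
    have e2 : v x ^ (p - 1 - 1) = v x ^ (p - 2) := by rw [show p - 1 - 1 = p - 2 by ring]
    have e1 : ((v x ^ (p - 1)) ^ 2)⁻¹ = (v x ^ p)⁻¹ * (v x ^ (p - 2))⁻¹ := by
      rw [sq, ← Real.rpow_add hvx, ← mul_inv, ← Real.rpow_add hvx,
        show p - 1 + (p - 1) = p + (p - 2) by ring]
    have e3 : (v x ^ (p - 2))⁻¹ * v x ^ (p - 2) = 1 :=
      inv_mul_cancel₀ (Real.rpow_pos_of_pos hvx _).ne'
    rw [h1, h2, e2, e1]
    field_simp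
    ring
  -- unfold and set notation
  simp only [PiconeL, PiconeR, matNorm]
  set gu := grad u x with hgu
  set gv := grad v x with hgv
  set M := A x with hM
  set qu := matQ M gu with hqu
  set qv := matQ M gv with hqv
  set s := M.mulVec gv ⬝ᵥ gu with hs
  set a := Real.sqrt qu with ha
  set b := Real.sqrt qv with hb
  set t := u x / v x with htdef
  have ht0 : 0 ≤ t := div_nonneg hux hvx.le
  have ha0 : 0 ≤ a := Real.sqrt_nonneg _
  have hb0 : 0 ≤ b := Real.sqrt_nonneg _
  have hqv0 : 0 ≤ qv := hpos _
  have hb2 : b ^ 2 = qv := Real.sq_sqrt hqv0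
  have hdot : M.mulVec gv ⬝ᵥ grad (fun y => u y ^ p / v y ^ (p - 1)) x
      = (p * t ^ (p - 1)) * s + (-((p - 1) * t ^ p)) * qv := by
    rw [hgradw]
    simp only [hqv, hs, matQ, dotProduct, mul_add, Finset.sum_add_distrib,
      Finset.mul_sum]
    congr 1 <;> exact Finset.sum_congr rfl fun i _ => by ring
  have E1 : b ^ (p - 2) * qv = b ^ p := by
    rcases eq_or_lt_of_le hb0 with hb1 | hb1
    · have hqvz : qv = 0 := by rw [← hb2, ← hb1]; ring
      rw [hqvz, mul_zero, ← hb1, Real.zero_rpow (ne_of_gt hp0)]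
    · have hbne : b ≠ 0 := hb1.ne'
      rw [← hb2, sq, ← mul_assoc, ← Real.rpow_add_one hbne, ← Real.rpow_add_one hbne,
        show p - 2 + 1 + 1 = p by ring]
  constructor
  · -- L = R
    rw [hdot]
    linear_combination (1 - p) * t ^ p * E1
  · -- 0 ≤ L
    rcases eq_or_lt_of_le hqv0 with hqvz | hqvz
    · -- degenerate case: ∇v = 0
      have hgvz : gv = 0 := by
        have h1 : θ * (gv ⬝ᵥ gv) ≤ 0 := (hbd x rfl gv).1.trans_eq hqvz.symm
        have h2 : gv ⬝ᵥ gv = 0 :=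
          le_antisymm (le_of_not_gt fun hlt => (mul_pos hθ hlt).not_ge h1)
            (picone_dot_self_nonneg gv)
        exact dotProduct_self_eq_zero.1 h2
      have hsz : s = 0 := by rw [hs, hgvz]; simp
      have hbz : b = 0 := by rw [hb, ← hqvz, Real.sqrt_zero]
      rw [hsz, hbz, mul_zero, Real.zero_rpow (ne_of_gt hp0)]
      have := Real.rpow_nonneg ha0 p
      nlinarith [this]
    · -- main case via Cauchy–Schwarz and Young
      have hbpos : 0 < b := Real.sqrt_pos.2 hqvz
      have hcs : s ≤ a * b := picone_matQ_cs hsym hpos gu gv hqvz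
      have htb0 : 0 ≤ t * b := mul_nonneg ht0 hb0
      have hq : p.HolderConjugate (p / (p - 1)) :=
        (Real.holderConjugate_iff_eq_conjExponent hp).2 rfl
      have hyoung0 := Real.young_inequality_of_nonneg ha0
        (Real.rpow_nonneg htb0 (p - 1)) hq
      have hz : ((t * b) ^ (p - 1)) ^ (p / (p - 1)) = (t * b) ^ p := by
        rw [← Real.rpow_mul htb0]
        congr 1
        field_simp
      rw [hz] at hyoung0
      have hyoung : p * (a * (t * b) ^ (p - 1)) ≤ a ^ p + (p - 1) * (t * b) ^ p := by
        have h4 := mul_le_mul_of_nonneg_left hyoung0 hp0.le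
        have heq : p * (a ^ p / p + (t * b) ^ p / (p / (p - 1)))
            = a ^ p + (p - 1) * (t * b) ^ p := by
          field_simp
        linarith [h4, heq.le, heq.ge]
      have hc0 : 0 ≤ p * t ^ (p - 1) * b ^ (p - 2) :=
        mul_nonneg (mul_nonneg hp0.le (Real.rpow_nonneg ht0 _)) (Real.rpow_nonneg hb0 _)
      have h1 : p * t ^ (p - 1) * b ^ (p - 2) * s ≤ p * t ^ (p - 1) * b ^ (p - 2) * (a * b) :=
        mul_le_mul_of_nonneg_left hcs hc0
      have h2 : p * t ^ (p - 1) * b ^ (p - 2) * (a * b) = p * (a * (t * b) ^ (p - 1)) := by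
        rw [Real.mul_rpow ht0 hb0,
          show b ^ (p - 1) = b ^ (p - 2) * b by
            rw [← Real.rpow_add_one hbpos.ne', show p - 2 + 1 = p - 1 by ring]]
        ring
      have h3 : (p - 1) * (t ^ p * b ^ p) = (p - 1) * ((t * b) ^ p) := by
        rw [Real.mul_rpow ht0 hb0]
      nlinarith [hyoung, h1, h2, h3]

end
end

section
/- Let Ω ⊆ ℝⁿ be a domain and let A : Ω → ℝ^{n×n} be a symmetric matrix-valued function that is locally uniformly positive definite on Ω. Let u, v ∈ C¹(Ω) with u ≥ 0 and v > 0 on Ω. If L_A(u,v)(x) = 0 for almost every x ∈ Ω, then there exists a constant k ≥ 0 such that u = k·v on Ω. Conversely, if u = k·v for some k ≥ 0, then L_A(u,v) ≡ 0 on Ω. -/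
open MeasureTheory Matrix Filter Topology

noncomputable section

variable {n : ℕ}

lemma pq_dot_self_nonneg (ξ : Fin n → ℝ) : 0 ≤ ξ ⬝ᵥ ξ :=
  Finset.sum_nonneg fun i _ => mul_self_nonneg (ξ i)

lemma pq_eq_zero_of_dot_self {ξ : Fin n → ℝ} (h : ξ ⬝ᵥ ξ ≤ 0) : ξ = 0 := by
  have h0 : ξ ⬝ᵥ ξ = 0 := le_antisymm h (pq_dot_self_nonneg ξ)
  funext i
  have := (Finset.sum_eq_zero_iff_of_nonneg
    (fun i _ => mul_self_nonneg (ξ i))).mp h0 i (Finset.mem_univ i)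
  simpa using mul_self_eq_zero.mp this

lemma pq_symm_dot {A : Matrix (Fin n) (Fin n) ℝ} (hs : A.IsSymm) (ξ η : Fin n → ℝ) :
    A.mulVec ξ ⬝ᵥ η = A.mulVec η ⬝ᵥ ξ := by
  calc A.mulVec ξ ⬝ᵥ η = η ⬝ᵥ A.mulVec ξ := dotProduct_comm _ _
    _ = Matrix.vecMul η A ⬝ᵥ ξ := Matrix.dotProduct_mulVec η A ξ
    _ = A.mulVec η ⬝ᵥ ξ := by rw [← Matrix.mulVec_transpose, hs]

lemma pq_expand {A : Matrix (Fin n) (Fin n) ℝ} (hs : A.IsSymm) (c : ℝ) (ξ η : Fin n → ℝ) :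
    matQ A (ξ - c • η) = matQ A ξ - 2*c*(A.mulVec η ⬝ᵥ ξ) + c^2 * matQ A η := by
  simp only [matQ, Matrix.mulVec_sub, Matrix.mulVec_smul, sub_dotProduct,
    smul_dotProduct, dotProduct_sub, dotProduct_smul, smul_eq_mul]
  rw [pq_symm_dot hs ξ η]
  ring

lemma pq_cs {A : Matrix (Fin n) (Fin n) ℝ} (hs : A.IsSymm) {θ : ℝ} (hθ : 0 < θ)
    (hpd : ∀ ζ : Fin n → ℝ, θ * (ζ ⬝ᵥ ζ) ≤ matQ A ζ) (ξ η : Fin n → ℝ) :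
    A.mulVec η ⬝ᵥ ξ ≤ matNorm A ξ * matNorm A η := by
  have hQξ : 0 ≤ matQ A ξ :=
    le_trans (mul_nonneg hθ.le (pq_dot_self_nonneg ξ)) (hpd ξ)
  have hQη : 0 ≤ matQ A η :=
    le_trans (mul_nonneg hθ.le (pq_dot_self_nonneg η)) (hpd η)
  by_cases hη : matQ A η = 0
  · have hη0 : η = 0 := by
      apply pq_eq_zero_of_dot_self
      nlinarith [hpd η, hθ]
    rw [hη0]
    simp [Matrix.mulVec_zero]
    exact mul_nonneg (Real.sqrt_nonneg _) (Real.sqrt_nonneg _)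
  · have hQη' : 0 < matQ A η := lt_of_le_of_ne hQη (Ne.symm hη)
    set B := A.mulVec η ⬝ᵥ ξ with hB
    have h0 : 0 ≤ matQ A (ξ - (B / matQ A η) • η) :=
      le_trans (mul_nonneg hθ.le (pq_dot_self_nonneg _)) (hpd _)
    rw [pq_expand hs] at h0
    have hc : (B / matQ A η) * matQ A η = B := div_mul_cancel₀ B hη
    have hB2 : B^2 ≤ matQ A ξ * matQ A η := by nlinarith [h0, hc, hQη']
    calc B ≤ |B| := le_abs_self B
      _ = Real.sqrt (B^2) := (Real.sqrt_sq_eq_abs B).symm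
      _ ≤ Real.sqrt (matQ A ξ * matQ A η) := Real.sqrt_le_sqrt hB2
      _ = matNorm A ξ * matNorm A η := Real.sqrt_mul hQξ _

lemma pq_young {p : ℝ} (hp : 1 < p) {a m : ℝ} (ha : 0 ≤ a) (hm : 0 < m) :
    0 ≤ a ^ p + (p - 1) * m ^ p - p * m ^ (p - 1) * a ∧
    (a ^ p + (p - 1) * m ^ p - p * m ^ (p - 1) * a = 0 → a = m) := by
  set s := a / m with hs
  have hs0 : 0 ≤ s := div_nonneg ha hm.le
  have hA : a = s * m := by rw [hs, div_mul_cancel₀ a hm.ne']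
  have hmp : m ^ (p-1) * m = m ^ p := by
    have h1 : m ^ ((p-1)+1) = m ^ (p-1) * m ^ (1:ℝ) := Real.rpow_add hm _ _
    rw [Real.rpow_one] at h1
    rw [← h1]; norm_num
  have key : a ^ p + (p - 1) * m ^ p - p * m ^ (p - 1) * a
      = m ^ p * (s ^ p + (p - 1) - p * s) := by
    rw [hA, Real.mul_rpow hs0 hm.le,
      show p * m ^ (p-1) * (s * m) = p * s * (m^(p-1) * m) from by ring, hmp]
    ring
  have hmp_pos : 0 < m ^ p := Real.rpow_pos_of_pos hm p
  have hbern : 1 + p * (s - 1) ≤ s ^ p := by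
    have h := one_add_mul_self_le_rpow_one_add
      (show (-1:ℝ) ≤ s - 1 by linarith) hp.le
    rwa [show (1:ℝ) + (s-1) = s by ring] at h
  constructor
  · rw [key]
    apply mul_nonneg hmp_pos.le
    linarith
  · intro h0
    rw [key] at h0
    have h1 : s ^ p + (p - 1) - p * s = 0 := by
      rcases mul_eq_zero.mp h0 with h | h
      · exact absurd h hmp_pos.ne'
      · exact h
    by_contra hne
    have hs1 : s ≠ 1 := by
      intro h; exact hne (by rw [hA, h, one_mul])
    have h2 := one_add_mul_self_lt_rpow_one_add
      (show (-1:ℝ) ≤ s - 1 by linarith)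
      (by intro h; exact hs1 (by linarith)) hp
    rw [show (1:ℝ) + (s-1) = s by ring] at h2
    linarith

lemma pq_key {p : ℝ} (hp : 1 < p) (A : Matrix (Fin n) (Fin n) ℝ) (hs : A.IsSymm)
    {θ : ℝ} (hθ : 0 < θ) (hpd : ∀ ζ : Fin n → ℝ, θ * (ζ ⬝ᵥ ζ) ≤ matQ A ζ)
    (gu gv : Fin n → ℝ) {t : ℝ} (ht : 0 ≤ t)
    (hL : matNorm A gu ^ p + (p - 1) * t ^ p * matNorm A gv ^ p
      - p * t ^ (p - 1) * matNorm A gv ^ (p - 2) * (A.mulVec gv ⬝ᵥ gu) = 0) :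
    gu = t • gv := by
  have hp0 : (0:ℝ) < p := lt_trans one_pos hp
  have hQu : 0 ≤ matQ A gu :=
    le_trans (mul_nonneg hθ.le (pq_dot_self_nonneg gu)) (hpd gu)
  have hQv : 0 ≤ matQ A gv :=
    le_trans (mul_nonneg hθ.le (pq_dot_self_nonneg gv)) (hpd gv)
  set a := matNorm A gu with ha_def
  set bv := matNorm A gv with hbv_def
  have ha0 : 0 ≤ a := Real.sqrt_nonneg _
  have hbv0 : 0 ≤ bv := Real.sqrt_nonneg _
  have ha2 : a ^ 2 = matQ A gu := Real.sq_sqrt hQu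
  have hb2 : bv ^ 2 = matQ A gv := Real.sq_sqrt hQv
  have hgu_zero : a = 0 → gu = 0 := by
    intro h
    apply pq_eq_zero_of_dot_self
    have hq : matQ A gu = 0 := by rw [← ha2, h]; ring
    nlinarith [hpd gu, hθ]
  by_cases hbvz : bv = 0
  · -- gv = 0
    have hgv : gv = 0 := by
      apply pq_eq_zero_of_dot_self
      have hq : matQ A gv = 0 := by rw [← hb2, hbvz]; ring
      nlinarith [hpd gv, hθ]
    have hB : A.mulVec gv ⬝ᵥ gu = 0 := by
      rw [hgv]; simp [Matrix.mulVec_zero]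
    rw [hbvz, hB, Real.zero_rpow hp0.ne'] at hL
    have hap : a ^ p = 0 := by linarith [hL]
    have : a = 0 := (Real.rpow_eq_zero ha0 hp0.ne').mp hap
    rw [hgu_zero this, hgv]; simp
  · have hbv : 0 < bv := lt_of_le_of_ne hbv0 (Ne.symm hbvz)
    by_cases htz : t = 0
    · rw [htz, Real.zero_rpow hp0.ne',
        Real.zero_rpow (show p - 1 ≠ 0 by intro h; exact absurd (by linarith : p = 1) hp.ne')] at hL
      have hap : a ^ p = 0 := by linarith [hL]
      have : a = 0 := (Real.rpow_eq_zero ha0 hp0.ne').mp hap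
      rw [hgu_zero this, htz]; simp
    · have ht' : 0 < t := lt_of_le_of_ne ht (Ne.symm htz)
      set m := t * bv with hm_def
      have hm : 0 < m := mul_pos ht' hbv
      set B := A.mulVec gv ⬝ᵥ gu with hB_def
      have hcs : B ≤ a * bv := pq_cs hs hθ hpd gu gv
      have htp1 : (0:ℝ) < t ^ (p-1) := Real.rpow_pos_of_pos ht' _
      have hbp2 : (0:ℝ) < bv ^ (p-2) := Real.rpow_pos_of_pos hbv _
      have hb_fact : bv ^ (p-2) * bv = bv ^ (p-1) := by
        have h1 : bv ^ ((p-2)+1) = bv ^ (p-2) * bv ^ (1:ℝ) := Real.rpow_add hbv _ _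
        rw [Real.rpow_one] at h1
        rw [show p-1 = (p-2)+1 by ring, h1]
      have hmP : m ^ p = t ^ p * bv ^ p := Real.mul_rpow ht hbv0
      have hm_pow : m ^ (p-1) = t ^ (p-1) * bv ^ (p-1) := Real.mul_rpow ht hbv0
      obtain ⟨hy1, hy2⟩ := pq_young hp ha0 hm
      have e1 : p * t^(p-1) * bv^(p-2) * B ≤ p * t^(p-1) * bv^(p-2) * (a * bv) := by
        apply mul_le_mul_of_nonneg_left hcs
        positivity
      have e2 : p * t^(p-1) * bv^(p-2) * (a * bv) = p * m^(p-1) * a := by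
        rw [hm_pow, ← hb_fact]; ring
      have e3 : a ^ p + (p-1) * m ^ p - p * m ^ (p-1) * a ≤ 0 := by
        rw [hmP]
        linarith [hL, e1, e2]
      have hy0 : a ^ p + (p-1) * m ^ p - p * m ^ (p-1) * a = 0 := le_antisymm e3 hy1
      have ha_eq : a = m := hy2 hy0
      have e4 : p * t^(p-1) * bv^(p-2) * B = p * t^(p-1) * bv^(p-2) * (a*bv) := by
        rw [hmP] at hy0
        linarith [hL, e2, hy0]
      have e5 : B = a * bv :=
        mul_left_cancel₀ (show p * t^(p-1) * bv^(p-2) ≠ 0 by positivity) e4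
      have hQ0 : matQ A (gu - t • gv) = 0 := by
        rw [pq_expand hs, ← ha2, ← hb2, ← hB_def, e5, ha_eq, hm_def]
        ring
      have hz : gu - t • gv = 0 := by
        apply pq_eq_zero_of_dot_self
        nlinarith [hpd (gu - t • gv), hθ]
      exact sub_eq_zero.mp hz

lemma pq_clm_apply (f : (Fin n → ℝ) →L[ℝ] ℝ) (ξ : Fin n → ℝ) :
    f ξ = ∑ i, ξ i * f (Pi.single i 1) := by
  have hξ : ξ = ∑ i, ξ i • (Pi.single i 1 : Fin n → ℝ) := by
    funext j
    rw [Finset.sum_apply]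
    simp [Pi.single_apply, Finset.sum_ite_eq]
  conv_lhs => rw [hξ]
  rw [map_sum]
  simp [_root_.map_smul, smul_eq_mul]

lemma pq_fderiv_eq (f g : (Fin n → ℝ) →L[ℝ] ℝ) (c : ℝ)
    (h : ∀ i, f (Pi.single i 1) = c * g (Pi.single i 1)) : f = c • g := by
  ext ξ
  rw [pq_clm_apply f ξ]
  simp only [h]
  rw [ContinuousLinearMap.smul_apply, smul_eq_mul, pq_clm_apply g ξ, Finset.mul_sum]
  exact Finset.sum_congr rfl fun i _ => by ring

lemma pq_fderiv_w_zero {u v : (Fin n → ℝ) → ℝ} {x : Fin n → ℝ}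
    (hud : DifferentiableAt ℝ u x) (hvd : DifferentiableAt ℝ v x) (hvx : v x ≠ 0)
    (hf : fderiv ℝ u x = (u x / v x) • fderiv ℝ v x) :
    fderiv ℝ (fun y => u y * (v y)⁻¹) x = 0 := by
  have hinv : HasFDerivAt (fun y => (v y)⁻¹)
      ((-(ContinuousLinearMap.mulLeftRight ℝ ℝ (v x)⁻¹ (v x)⁻¹)).comp (fderiv ℝ v x)) x := by
    exact (hasFDerivAt_inv' hvx).comp x hvd.hasFDerivAt
  have hw := hud.hasFDerivAt.mul hinv
  rw [show (fun y => u y * (v y)⁻¹) = (u * fun y => (v y)⁻¹) from rfl, hw.fderiv]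
  ext ξ
  simp only [ContinuousLinearMap.add_apply, ContinuousLinearMap.smul_apply,
    ContinuousLinearMap.comp_apply, ContinuousLinearMap.neg_apply,
    ContinuousLinearMap.mulLeftRight_apply, ContinuousLinearMap.zero_apply, hf,
    smul_eq_mul]
  field_simp
  ring

/-- Equality case in the Picone identity: for `u, v ∈ C¹(Ω)` with `u ≥ 0`, `v > 0`,
`L_A(u,v) = 0` a.e. in `Ω` iff `u = k v` in `Ω` for some constant `k ≥ 0`. -/
theorem picone_equality_case
    (n : ℕ) (hn : 2 ≤ n) (p : ℝ) (hp : 1 < p)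
    (Ω : Set (Fin n → ℝ)) (hΩo : IsOpen Ω) (hΩc : IsConnected Ω)
    (A : (Fin n → ℝ) → Matrix (Fin n) (Fin n) ℝ) (hA : LocUnifPD Ω A)
    (u v : (Fin n → ℝ) → ℝ)
    (hu : ContDiffOn ℝ 1 u Ω) (hv : ContDiffOn ℝ 1 v Ω)
    (hu0 : ∀ x ∈ Ω, 0 ≤ u x) (hv0 : ∀ x ∈ Ω, 0 < v x) :
    ((∀ᵐ x ∂(volume.restrict Ω), PiconeL p A u v x = 0) →
      ∃ k : ℝ, 0 ≤ k ∧ ∀ x ∈ Ω, u x = k * v x) ∧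
    (∀ k : ℝ, 0 ≤ k → (∀ x ∈ Ω, u x = k * v x) →
      ∀ x ∈ Ω, PiconeL p A u v x = 0) := by
  have hp0 : (0:ℝ) < p := lt_trans one_pos hp
  have hvne : ∀ x ∈ Ω, v x ≠ 0 := fun x hx => (hv0 x hx).ne'
  have hud : ∀ x ∈ Ω, DifferentiableAt ℝ u x := fun x hx =>
    (hu.contDiffAt (hΩo.mem_nhds hx)).differentiableAt one_ne_zero
  have hvd : ∀ x ∈ Ω, DifferentiableAt ℝ v x := fun x hx =>
    (hv.contDiffAt (hΩo.mem_nhds hx)).differentiableAt one_ne_zero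
  have hpdpt : ∀ x ∈ Ω, ∃ θ > (0:ℝ), ∀ ξ : Fin n → ℝ, θ * (ξ ⬝ᵥ ξ) ≤ matQ (A x) ξ := by
    intro x hx
    obtain ⟨θ, hθ, h⟩ := hA.2 {x} (Set.singleton_subset_iff.mpr hx) isCompact_singleton
    exact ⟨θ, hθ, fun ξ => (h x rfl ξ).1⟩
  constructor
  · intro hae
    set w : (Fin n → ℝ) → ℝ := fun y => u y * (v y)⁻¹ with hw_def
    have hwC : ContDiffOn ℝ 1 w Ω := hu.mul (hv.inv hvne)
    have hzero : ∀ x ∈ Ω, PiconeL p A u v x = 0 → fderiv ℝ w x = 0 := by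
      intro x hx hLx
      obtain ⟨θ, hθ, hpdx⟩ := hpdpt x hx
      have ht : 0 ≤ u x / v x := div_nonneg (hu0 x hx) (hv0 x hx).le
      have hkey : grad u x = (u x / v x) • grad v x :=
        pq_key hp (A x) (hA.1 x hx) hθ hpdx (grad u x) (grad v x) ht hLx
      have hfu : fderiv ℝ u x = (u x / v x) • fderiv ℝ v x := by
        apply pq_fderiv_eq
        intro i
        have h := congrFun hkey i
        simpa [grad, smul_eq_mul] using h
      exact pq_fderiv_w_zero (hud x hx) (hvd x hx) (hvne x hx) hfu
    have hae2 : ∀ᵐ x ∂(volume.restrict Ω), fderiv ℝ w x = 0 := by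
      filter_upwards [hae, ae_restrict_mem hΩo.measurableSet] with x h1 h2
      exact hzero x h2 h1
    have hfz : ∀ x ∈ Ω, fderiv ℝ w x = 0 := by
      intro x hx
      by_contra hne
      have hSopen : IsOpen (Ω ∩ (fderiv ℝ w) ⁻¹' ({0}ᶜ)) :=
        (hwC.continuousOn_fderiv_of_isOpen hΩo le_rfl).isOpen_inter_preimage hΩo
          (isOpen_compl_iff.mpr isClosed_singleton)
      have hSpos : 0 < volume (Ω ∩ (fderiv ℝ w) ⁻¹' ({0}ᶜ)) :=
        hSopen.measure_pos volume ⟨x, hx, hne⟩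
      have hNmeas : MeasurableSet ((fderiv ℝ w) ⁻¹' ({0}ᶜ)) :=
        (measurable_fderiv ℝ w) (isOpen_compl_iff.mpr isClosed_singleton).measurableSet
      have hS0 : volume (Ω ∩ (fderiv ℝ w) ⁻¹' ({0}ᶜ)) = 0 := by
        rw [Set.inter_comm, ← Measure.restrict_apply hNmeas]
        exact measure_mono_null (fun y hy => hy) (ae_iff.mp hae2)
      exact absurd hS0 hSpos.ne'
    obtain ⟨x₀, hx₀⟩ := hΩc.nonempty
    have hloc : ∀ x ∈ Ω, ∃ ε > (0:ℝ), Metric.ball x ε ⊆ Ω ∧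
        ∀ y ∈ Metric.ball x ε, w y = w x := by
      intro x hx
      obtain ⟨ε, hε, hball⟩ := Metric.isOpen_iff.mp hΩo x hx
      refine ⟨ε, hε, hball, fun y hy => ?_⟩
      have hdiff : DifferentiableOn ℝ w (Metric.ball x ε) := fun z hz =>
        ((hwC.contDiffAt (hΩo.mem_nhds (hball hz))).differentiableAt
          one_ne_zero).differentiableWithinAt
      exact (convex_ball x ε).is_const_of_fderivWithin_eq_zero hdiff
        (fun z hz => by
          rw [fderivWithin_of_isOpen Metric.isOpen_ball hz]
          exact hfz z (hball hz))
        hy (Metric.mem_ball_self hε)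
    have hconst : ∀ x ∈ Ω, w x = w x₀ := by
      intro x1 hx1
      by_contra hne
      obtain ⟨z, hzΩ, hzS, hzT⟩ := hΩc.isPreconnected
        {y | y ∈ Ω ∧ w y = w x₀} {y | y ∈ Ω ∧ w y ≠ w x₀}
        (by
          rw [Metric.isOpen_iff]
          rintro y ⟨hyΩ, hyw⟩
          obtain ⟨ε, hε, hball, hcw⟩ := hloc y hyΩ
          exact ⟨ε, hε, fun z hz => ⟨hball hz, by rw [hcw z hz, hyw]⟩⟩)
        (by
          rw [Metric.isOpen_iff]
          rintro y ⟨hyΩ, hyw⟩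
          obtain ⟨ε, hε, hball, hcw⟩ := hloc y hyΩ
          exact ⟨ε, hε, fun z hz => ⟨hball hz, by rw [hcw z hz]; exact hyw⟩⟩)
        (fun y hy => by
          by_cases h : w y = w x₀
          exacts [Or.inl ⟨hy, h⟩, Or.inr ⟨hy, h⟩])
        ⟨x₀, hx₀, hx₀, rfl⟩ ⟨x1, hx1, hx1, hne⟩
      exact hzT.2 hzS.2
    refine ⟨w x₀, mul_nonneg (hu0 x₀ hx₀) (inv_nonneg.mpr (hv0 x₀ hx₀).le),
      fun x hx => ?_⟩
    have h := hconst x hx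
    have hvx := hvne x hx
    rw [← h]
    show u x = u x * (v x)⁻¹ * v x
    field_simp
  · intro k hk hkv x hx
    obtain ⟨θ, hθ, hpdx⟩ := hpdpt x hx
    have hQv : 0 ≤ matQ (A x) (grad v x) :=
      le_trans (mul_nonneg hθ.le (pq_dot_self_nonneg _)) (hpdx _)
    have hfe : fderiv ℝ u x = k • fderiv ℝ v x := by
      have heq : u =ᶠ[𝓝 x] fun y => k * v y :=
        eventually_of_mem (hΩo.mem_nhds hx) hkv
      rw [heq.fderiv_eq]
      exact fderiv_const_mul (hvd x hx) k
    have hgu : grad u x = k • grad v x := funext fun i => by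
      simp [grad, hfe, smul_eq_mul]
    have hbv0 : 0 ≤ matNorm (A x) (grad v x) := Real.sqrt_nonneg _
    have hb2 : matNorm (A x) (grad v x) ^ 2 = matQ (A x) (grad v x) := Real.sq_sqrt hQv
    have hQs : matQ (A x) (k • grad v x) = k ^ 2 * matQ (A x) (grad v x) := by
      simp only [matQ, Matrix.mulVec_smul, smul_dotProduct, dotProduct_smul,
        smul_eq_mul]
      ring
    have hnorm : matNorm (A x) (k • grad v x) = k * matNorm (A x) (grad v x) := by
      unfold matNorm
      rw [hQs, Real.sqrt_mul (sq_nonneg k), Real.sqrt_sq hk]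
    have hBs : (A x).mulVec (grad v x) ⬝ᵥ (k • grad v x)
        = k * matQ (A x) (grad v x) := by
      simp [matQ, dotProduct_smul, smul_eq_mul]
    have hux : u x / v x = k := by
      rw [hkv x hx, mul_div_assoc, div_self (hvne x hx), mul_one]
    unfold PiconeL
    rw [hgu, hux, hnorm, hBs, ← hb2]
    set bv := matNorm (A x) (grad v x) with hbv_def
    by_cases hk0 : k = 0
    · rw [hk0]
      simp [Real.zero_rpow hp0.ne',
        Real.zero_rpow (show p - 1 ≠ 0 by intro h; exact hp.ne' (by linarith))]
    · have hk' : 0 < k := lt_of_le_of_ne hk (Ne.symm hk0)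
      by_cases hbz : bv = 0
      · rw [hbz]
        simp [Real.zero_rpow hp0.ne']
      · have hbv' : 0 < bv := lt_of_le_of_ne hbv0 (Ne.symm hbz)
        have e1 : k ^ (p-1) * k = k ^ p := by
          have h1 : k ^ ((p-1)+1) = k ^ (p-1) * k ^ (1:ℝ) := Real.rpow_add hk' _ _
          rw [Real.rpow_one] at h1
          rw [← h1]
          norm_num
        have e2 : bv ^ (p-2) * bv ^ (2:ℕ) = bv ^ p := by
          rw [← Real.rpow_natCast bv 2, ← Real.rpow_add hbv']
          norm_num
        rw [Real.mul_rpow hk hbv0]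
        rw [show p * k ^ (p-1) * bv ^ (p-2) * (k * bv ^ (2:ℕ))
          = p * (k ^ (p-1) * k) * (bv ^ (p-2) * bv ^ (2:ℕ)) from by ring, e1, e2]
        ring

end
end

section
/- For every 1 < p < ∞ there exist constants c = c(p) > 0 and C = C(p) > 0, independent of the dimension and of the matrix, such that for every n ≥ 1, every symmetric positive semidefinite matrix A ∈ ℝ^{n×n}, and all a, b ∈ ℝⁿ: c |b|_A² (|a|_A + |b|_A)^{p−2} ≤ |a+b|_A^p − |a|_A^p − p |a|_A^{p−2} ⟨Aa, b⟩ ≤ C |b|_A² (|a|_A + |b|_A)^{p−2}, where the term |a|_A^{p−2}⟨Aa,b⟩ is interpreted as 0 when |a|_A = 0, and both sides are interpreted as 0 when |a|_A = |b|_A = 0. -/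
open MeasureTheory Matrix Filter Topology

noncomputable section

variable {n : ℕ}

section
open intervalIntegral
namespace EnergyAux

/-- quadratic `q(σ) = s² + 2rσ + σ²t²`. -/
def qf (s t r σ : ℝ) : ℝ := s^2 + 2*r*σ + σ^2*t^2

/-- first derivative of `σ ↦ q(σ)^{p/2}`. -/
def D1 (p s t r σ : ℝ) : ℝ := (2*r + 2*σ*t^2) * (p/2) * (qf s t r σ) ^ (p/2 - 1)

/-- second derivative of `σ ↦ q(σ)^{p/2}`. -/
def D2 (p s t r σ : ℝ) : ℝ :=
  (2*t^2*(p/2)) * (qf s t r σ) ^ (p/2 - 1)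
    + ((2*r + 2*σ*t^2) * (p/2)) * ((2*r + 2*σ*t^2) * (p/2 - 1) * (qf s t r σ) ^ (p/2 - 2))

lemma qf_hasDeriv (s t r σ : ℝ) : HasDerivAt (qf s t r) (2*r + 2*σ*t^2) σ := by
  have h1 : HasDerivAt (fun σ : ℝ => s^2 + 2*r*σ + σ^2*t^2)
      (0 + 2*r*1 + ((2:ℕ)*σ^(2-1))*t^2) σ :=
    ((hasDerivAt_const σ (s^2)).add (((hasDerivAt_id σ).const_mul (2*r)))).add
      (((hasDerivAt_pow 2 σ)).mul_const (t^2))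
  unfold qf
  convert h1 using 1
  push_cast
  ring

lemma qf_cont (s t r : ℝ) : Continuous (qf s t r) := by
  unfold qf; continuity

lemma rpow_qf_contOn (s t r e : ℝ) (hq : ∀ σ ∈ Set.Icc (0:ℝ) 1, 0 < qf s t r σ) :
    ContinuousOn (fun σ => (qf s t r σ) ^ e) (Set.Icc (0:ℝ) 1) :=
  ContinuousOn.rpow_const (qf_cont s t r).continuousOn
    (fun x hx => Or.inl (hq x hx).ne')

lemma D1_cont (p s t r : ℝ) (hq : ∀ σ ∈ Set.Icc (0:ℝ) 1, 0 < qf s t r σ) :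
    ContinuousOn (D1 p s t r) (Set.Icc (0:ℝ) 1) := by
  unfold D1
  exact (Continuous.continuousOn (by continuity)).mul (rpow_qf_contOn s t r _ hq)

lemma D2_cont (p s t r : ℝ) (hq : ∀ σ ∈ Set.Icc (0:ℝ) 1, 0 < qf s t r σ) :
    ContinuousOn (D2 p s t r) (Set.Icc (0:ℝ) 1) := by
  unfold D2
  exact ((Continuous.continuousOn (by continuity)).mul (rpow_qf_contOn s t r _ hq)).add
    ((Continuous.continuousOn (by continuity)).mul
      ((Continuous.continuousOn (by continuity)).mul (rpow_qf_contOn s t r _ hq)))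

lemma phi_hasDeriv (p s t r σ : ℝ) (hq : qf s t r σ ≠ 0) :
    HasDerivAt (fun σ => (qf s t r σ) ^ (p/2)) (D1 p s t r σ) σ := by
  have := (qf_hasDeriv s t r σ).rpow_const (p := p/2) (Or.inl hq)
  simpa [D1, mul_comm, mul_assoc, mul_left_comm] using this

lemma D1_hasDeriv (p s t r σ : ℝ) (hq : qf s t r σ ≠ 0) :
    HasDerivAt (D1 p s t r) (D2 p s t r σ) σ := by
  have hlin : HasDerivAt (fun σ : ℝ => (2*r + 2*σ*t^2) * (p/2)) (2*t^2*(p/2)) σ := by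
    have h0 : HasDerivAt (fun σ : ℝ => 2*r + 2*σ*t^2) (2*t^2) σ := by
      have h1 : HasDerivAt (fun σ : ℝ => 2*σ*t^2) (2*t^2) σ := by
        simpa using ((hasDerivAt_id σ).const_mul 2).mul_const (t^2)
      exact h1.const_add (2*r)
    exact h0.mul_const (p/2)
  have h2 : HasDerivAt (fun σ => (qf s t r σ) ^ (p/2 - 1))
      ((2*r + 2*σ*t^2) * (p/2 - 1) * (qf s t r σ) ^ (p/2 - 2)) σ := by
    have := (qf_hasDeriv s t r σ).rpow_const (p := p/2 - 1) (Or.inl hq)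
    rw [show p/2 - 1 - 1 = p/2 - 2 from by ring] at this
    exact this
  have := hlin.mul h2
  unfold D2 D1
  exact this

lemma D2_bounds (p s t r : ℝ) (hp : 1 < p) (hs : 0 ≤ s) (ht : 0 ≤ t) (hr : |r| ≤ s*t)
    (σ : ℝ) (hσ : 0 ≤ σ) (hqσ : 0 < qf s t r σ) :
    p * min 1 (p-1) * t^2 * (qf s t r σ) ^ (p/2 - 1) ≤ D2 p s t r σ ∧
    D2 p s t r σ ≤ p * max 1 (p-1) * t^2 * (qf s t r σ) ^ (p/2 - 1) := by
  set q := qf s t r σ with hqdef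
  have hq1 : q ^ (p/2 - 1) = q ^ (p/2 - 2) * q := by
    rw [← Real.rpow_add_one hqσ.ne' (p/2 - 2)]
    congr 1
    ring
  have key : D2 p s t r σ
      = p * (q ^ (p/2-2)) * (t^2 * q + (p-2) * (r + σ*t^2)^2) := by
    unfold D2
    rw [hq1]
    ring
  have hρ : (r + σ*t^2)^2 ≤ t^2 * q := by
    have h1 : (r + σ*t^2)^2 - t^2 * q = r^2 - (s*t)^2 := by
      rw [hqdef]; unfold qf; ring
    have h2 : r^2 ≤ (s*t)^2 := by
      rw [← sq_abs r]
      exact pow_le_pow_left₀ (abs_nonneg r) hr 2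
    linarith
  have he2 : (0:ℝ) ≤ q ^ (p/2-2) := Real.rpow_nonneg hqσ.le _
  have hρ0 : (0:ℝ) ≤ (r + σ*t^2)^2 := sq_nonneg _
  have hp0 : (0:ℝ) < p := by linarith
  rcases le_or_gt 2 p with h2p | h2p
  · have hmin : min 1 (p-1) = 1 := min_eq_left (by linarith)
    have hmax : max 1 (p-1) = p-1 := max_eq_right (by linarith)
    constructor
    · rw [hmin, key, hq1]
      nlinarith [mul_nonneg (mul_nonneg hp0.le he2) (mul_nonneg (by linarith : (0:ℝ) ≤ p - 2) hρ0)]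
    · rw [hmax, key, hq1]
      nlinarith [mul_nonneg hp0.le he2, mul_le_mul_of_nonneg_left hρ (by linarith : (0:ℝ) ≤ p - 2)]
  · have hmin : min 1 (p-1) = p-1 := min_eq_right (by linarith)
    have hmax : max 1 (p-1) = 1 := max_eq_left (by linarith)
    constructor
    · rw [hmin, key, hq1]
      nlinarith [mul_nonneg hp0.le he2, mul_le_mul_of_nonpos_left hρ (by linarith : p - 2 ≤ 0)]
    · rw [hmax, key, hq1]
      nlinarith [mul_nonneg (mul_nonneg hp0.le he2) hρ0]

variable {p s t r : ℝ}

lemma D2_intOn (p s t r : ℝ) (hq : ∀ σ ∈ Set.Icc (0:ℝ) 1, 0 < qf s t r σ)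
    {a b : ℝ} (ha : a ∈ Set.Icc (0:ℝ) 1) (hb : b ∈ Set.Icc (0:ℝ) 1) :
    IntervalIntegrable (D2 p s t r) volume a b := by
  apply ContinuousOn.intervalIntegrable
  apply (D2_cont p s t r hq).mono
  rw [show Set.Icc (0:ℝ) 1 = Set.uIcc (0:ℝ) 1 from (Set.uIcc_of_le zero_le_one).symm]
  exact Set.uIcc_subset_uIcc (by rw [Set.uIcc_of_le zero_le_one]; exact ha)
    (by rw [Set.uIcc_of_le zero_le_one]; exact hb)

lemma inner_ftc (p s t r : ℝ) (hq : ∀ σ ∈ Set.Icc (0:ℝ) 1, 0 < qf s t r σ)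
    {θ : ℝ} (hθ : θ ∈ Set.Icc (0:ℝ) 1) :
    ∫ σ in (0:ℝ)..θ, D2 p s t r σ = D1 p s t r θ - D1 p s t r 0 := by
  apply integral_eq_sub_of_hasDerivAt
  · intro x hx
    rw [Set.uIcc_of_le hθ.1] at hx
    exact D1_hasDeriv p s t r x (hq x ⟨hx.1, hx.2.trans hθ.2⟩).ne'
  · exact D2_intOn p s t r hq ⟨le_refl 0, zero_le_one⟩ hθ

lemma outer_ftc (p s t r : ℝ) (hq : ∀ σ ∈ Set.Icc (0:ℝ) 1, 0 < qf s t r σ) :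
    ∫ θ in (0:ℝ)..1, (D1 p s t r θ - D1 p s t r 0)
      = (qf s t r 1) ^ (p/2) - (qf s t r 0) ^ (p/2) - D1 p s t r 0 := by
  have h : ∫ θ in (0:ℝ)..1, (D1 p s t r θ - D1 p s t r 0)
      = ((qf s t r 1) ^ (p/2) - 1 * D1 p s t r 0)
        - ((qf s t r 0) ^ (p/2) - 0 * D1 p s t r 0) := by
    apply integral_eq_sub_of_hasDerivAt (f := fun θ => (qf s t r θ) ^ (p/2) - θ * D1 p s t r 0)
    · intro x hx
      rw [Set.uIcc_of_le zero_le_one] at hx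
      have h1 := phi_hasDeriv p s t r x (hq x hx).ne'
      have h2 := (hasDerivAt_id x).mul_const (D1 p s t r 0)
      have h3 := h1.sub h2
      rw [one_mul] at h3
      exact h3
    · apply ContinuousOn.intervalIntegrable
      rw [Set.uIcc_of_le zero_le_one]
      exact (D1_cont p s t r hq).sub continuousOn_const
  rw [h]; ring

lemma core_upper (p s t r : ℝ) (hp : 1 < p) (hs : 0 ≤ s) (ht : 0 ≤ t) (hr : |r| ≤ s*t)
    (hq : ∀ σ ∈ Set.Icc (0:ℝ) 1, 0 < qf s t r σ)
    (B : ℝ) (hB : ∀ σ ∈ Set.Icc (0:ℝ) 1, (qf s t r σ) ^ (p/2 - 1) ≤ B) :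
    (qf s t r 1) ^ (p/2) - (qf s t r 0) ^ (p/2) - D1 p s t r 0
      ≤ p * max 1 (p-1) * t^2 * B / 2 := by
  have hc0 : (0:ℝ) ≤ p * max 1 (p-1) * t^2 :=
    mul_nonneg (mul_nonneg (by linarith) (le_max_of_le_left zero_le_one)) (sq_nonneg t)
  set Cst := p * max 1 (p-1) * t^2 * B with hCst
  have step1 : ∀ θ ∈ Set.Icc (0:ℝ) 1, D1 p s t r θ - D1 p s t r 0 ≤ θ * Cst := by
    intro θ hθ
    rw [← inner_ftc p s t r hq hθ]
    have : ∫ σ in (0:ℝ)..θ, D2 p s t r σ ≤ ∫ _ in (0:ℝ)..θ, Cst := by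
      apply integral_mono_on hθ.1 (D2_intOn p s t r hq ⟨le_refl 0, zero_le_one⟩ hθ)
        intervalIntegrable_const
      intro x hx
      have hx1 : x ∈ Set.Icc (0:ℝ) 1 := ⟨hx.1, hx.2.trans hθ.2⟩
      calc D2 p s t r x ≤ p * max 1 (p-1) * t^2 * (qf s t r x) ^ (p/2-1) :=
            (D2_bounds p s t r hp hs ht hr x hx1.1 (hq x hx1)).2
        _ ≤ Cst := by rw [hCst]; exact mul_le_mul_of_nonneg_left (hB x hx1) hc0
    rwa [intervalIntegral.integral_const, smul_eq_mul, sub_zero] at this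
  have hint1 : IntervalIntegrable (fun θ => D1 p s t r θ - D1 p s t r 0) volume 0 1 := by
    apply ContinuousOn.intervalIntegrable
    rw [Set.uIcc_of_le zero_le_one]
    exact (D1_cont p s t r hq).sub continuousOn_const
  have hint2 : IntervalIntegrable (fun θ : ℝ => θ * Cst) volume 0 1 :=
    (continuous_id.mul continuous_const).intervalIntegrable 0 1
  have h2 : ∫ θ in (0:ℝ)..1, (D1 p s t r θ - D1 p s t r 0)
      ≤ ∫ θ in (0:ℝ)..1, θ * Cst :=
    integral_mono_on zero_le_one hint1 hint2 step1
  rw [outer_ftc p s t r hq] at h2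
  calc (qf s t r 1) ^ (p/2) - (qf s t r 0) ^ (p/2) - D1 p s t r 0
      ≤ ∫ θ in (0:ℝ)..1, θ * Cst := h2
    _ = Cst / 2 := by
        rw [intervalIntegral.integral_mul_const, integral_id]
        ring
    _ = p * max 1 (p-1) * t^2 * B / 2 := by rw [hCst]

lemma core_lower (p s t r : ℝ) (hp : 1 < p) (hs : 0 ≤ s) (ht : 0 ≤ t) (hr : |r| ≤ s*t)
    (hq : ∀ σ ∈ Set.Icc (0:ℝ) 1, 0 < qf s t r σ)
    (α β B' : ℝ) (h0α : 0 ≤ α) (hαβ : α ≤ β) (hβ1 : β ≤ 1) (hB'0 : 0 ≤ B')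
    (hB : ∀ σ ∈ Set.Icc α β, B' ≤ (qf s t r σ) ^ (p/2 - 1)) :
    (1-β) * ((β-α) * (p * min 1 (p-1) * t^2 * B'))
      ≤ (qf s t r 1) ^ (p/2) - (qf s t r 0) ^ (p/2) - D1 p s t r 0 := by
  have hc0 : (0:ℝ) ≤ p * min 1 (p-1) * t^2 :=
    mul_nonneg (mul_nonneg (by linarith) (le_min zero_le_one (by linarith))) (sq_nonneg t)
  set L := p * min 1 (p-1) * t^2 * B' with hL
  have hL0 : 0 ≤ L := mul_nonneg hc0 hB'0
  have hsub : ∀ x : ℝ, α ≤ x → x ≤ β → x ∈ Set.Icc (0:ℝ) 1 :=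
    fun x h1 h2 => ⟨h0α.trans h1, h2.trans hβ1⟩
  have hD2pos : ∀ x ∈ Set.Icc (0:ℝ) 1, 0 ≤ D2 p s t r x := by
    intro x hx
    have := (D2_bounds p s t r hp hs ht hr x hx.1 (hq x hx)).1
    have h0 : 0 ≤ p * min 1 (p-1) * t^2 * (qf s t r x) ^ (p/2-1) :=
      mul_nonneg hc0 (Real.rpow_nonneg (hq x hx).le _)
    linarith
  have hmemα : α ∈ Set.Icc (0:ℝ) 1 := ⟨h0α, hαβ.trans hβ1⟩
  have hmemβ : β ∈ Set.Icc (0:ℝ) 1 := ⟨h0α.trans hαβ, hβ1⟩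
  have h_nonneg : ∀ θ ∈ Set.Icc (0:ℝ) 1, 0 ≤ D1 p s t r θ - D1 p s t r 0 := by
    intro θ hθ
    rw [← inner_ftc p s t r hq hθ]
    apply integral_nonneg hθ.1
    intro x hx
    exact hD2pos x ⟨hx.1, hx.2.trans hθ.2⟩
  have h_low : ∀ θ ∈ Set.Icc β 1, (β-α) * L ≤ D1 p s t r θ - D1 p s t r 0 := by
    intro θ hθ
    have hθ1 : θ ∈ Set.Icc (0:ℝ) 1 := ⟨(h0α.trans hαβ).trans hθ.1, hθ.2⟩
    rw [← inner_ftc p s t r hq hθ1]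
    have hsplit1 : ∫ σ in (0:ℝ)..θ, D2 p s t r σ
        = (∫ σ in (0:ℝ)..α, D2 p s t r σ) + ∫ σ in α..θ, D2 p s t r σ :=
      (integral_add_adjacent_intervals (D2_intOn p s t r hq ⟨le_refl 0, zero_le_one⟩ hmemα)
        (D2_intOn p s t r hq hmemα hθ1)).symm
    have hsplit2 : ∫ σ in α..θ, D2 p s t r σ
        = (∫ σ in α..β, D2 p s t r σ) + ∫ σ in β..θ, D2 p s t r σ :=
      (integral_add_adjacent_intervals (D2_intOn p s t r hq hmemα hmemβ)
        (D2_intOn p s t r hq hmemβ hθ1)).symm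
    have h1 : 0 ≤ ∫ σ in (0:ℝ)..α, D2 p s t r σ :=
      integral_nonneg h0α (fun x hx => hD2pos x ⟨hx.1, hx.2.trans hmemα.2⟩)
    have h3 : 0 ≤ ∫ σ in β..θ, D2 p s t r σ :=
      integral_nonneg hθ.1 (fun x hx => hD2pos x ⟨hmemβ.1.trans hx.1, hx.2.trans hθ.2⟩)
    have h2 : (β-α) * L ≤ ∫ σ in α..β, D2 p s t r σ := by
      have : ∫ _ in α..β, L ≤ ∫ σ in α..β, D2 p s t r σ := by
        apply integral_mono_on hαβ intervalIntegrable_const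
          (D2_intOn p s t r hq hmemα hmemβ)
        intro x hx
        have hx1 := hsub x hx.1 hx.2
        calc L ≤ p * min 1 (p-1) * t^2 * (qf s t r x) ^ (p/2-1) := by
              rw [hL]; exact mul_le_mul_of_nonneg_left (hB x hx) hc0
          _ ≤ D2 p s t r x := (D2_bounds p s t r hp hs ht hr x hx1.1 (hq x hx1)).1
      rwa [intervalIntegral.integral_const, smul_eq_mul] at this
    linarith
  have hint1 : ∀ a b : ℝ, a ∈ Set.Icc (0:ℝ) 1 → b ∈ Set.Icc (0:ℝ) 1 →
      IntervalIntegrable (fun θ => D1 p s t r θ - D1 p s t r 0) volume a b := by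
    intro a b ha hb
    apply ContinuousOn.intervalIntegrable
    apply ContinuousOn.mono ((D1_cont p s t r hq).sub continuousOn_const)
    rw [show Set.Icc (0:ℝ) 1 = Set.uIcc (0:ℝ) 1 from (Set.uIcc_of_le zero_le_one).symm]
    exact Set.uIcc_subset_uIcc (by rw [Set.uIcc_of_le zero_le_one]; exact ha)
      (by rw [Set.uIcc_of_le zero_le_one]; exact hb)
  rw [← outer_ftc p s t r hq]
  have hsplit : ∫ θ in (0:ℝ)..1, (D1 p s t r θ - D1 p s t r 0)
      = (∫ θ in (0:ℝ)..β, (D1 p s t r θ - D1 p s t r 0))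
        + ∫ θ in β..(1:ℝ), (D1 p s t r θ - D1 p s t r 0) :=
    (integral_add_adjacent_intervals (hint1 0 β ⟨le_refl 0, zero_le_one⟩ hmemβ)
      (hint1 β 1 hmemβ ⟨zero_le_one.trans (le_refl 1), le_refl 1⟩)).symm
  have h1 : 0 ≤ ∫ θ in (0:ℝ)..β, (D1 p s t r θ - D1 p s t r 0) :=
    integral_nonneg hmemβ.1 (fun x hx => h_nonneg x ⟨hx.1, hx.2.trans hmemβ.2⟩)
  have h2 : (1-β) * ((β-α) * L) ≤ ∫ θ in β..(1:ℝ), (D1 p s t r θ - D1 p s t r 0) := by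
    have : ∫ _ in β..(1:ℝ), ((β-α) * L) ≤ ∫ θ in β..(1:ℝ), (D1 p s t r θ - D1 p s t r 0) := by
      apply integral_mono_on hβ1 intervalIntegrable_const
        (hint1 β 1 hmemβ ⟨zero_le_one, le_refl 1⟩)
      exact h_low
    rwa [intervalIntegral.integral_const, smul_eq_mul] at this
  linarith

/-! ### Scalar-level lemmas -/

lemma sq_rpow (x : ℝ) (hx : 0 ≤ x) (e : ℝ) : (x^2) ^ e = x ^ (2*e) := by
  rw [← Real.rpow_natCast x 2, ← Real.rpow_mul hx]
  norm_num

lemma rpow_sub_one_mul (x : ℝ) (hx : 0 ≤ x) (e : ℝ) (he : e ≠ 0) :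
    x ^ (e - 1) * x = x ^ e := by
  rcases eq_or_lt_of_le hx with h | h
  · rw [← h, Real.zero_rpow he, mul_zero]
  · rw [← Real.rpow_add_one h.ne' (e-1)]
    norm_num

/-- the scalar quantity `N(s,t,r)`. -/
def Nfun (p s t r : ℝ) : ℝ := (s^2 + 2*r + t^2) ^ (p/2) - s^p - p * s^(p-2) * r

lemma Nfun_eq (p s t r : ℝ) (hs : 0 ≤ s) :
    Nfun p s t r = (qf s t r 1) ^ (p/2) - (qf s t r 0) ^ (p/2) - D1 p s t r 0 := by
  have h1 : qf s t r 1 = s^2 + 2*r + t^2 := by unfold qf; ring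
  have h0 : qf s t r 0 = s^2 := by unfold qf; ring
  have hD : D1 p s t r 0 = p * s^(p-2) * r := by
    unfold D1
    rw [h0, sq_rpow s hs, show 2*(p/2 - 1) = p - 2 by ring]
    ring
  rw [Nfun, h1, h0, hD, sq_rpow s hs, show 2*(p/2) = p by ring]

lemma qf_le_sq (s t r σ : ℝ) (hs : 0 ≤ s) (ht : 0 ≤ t) (hr : |r| ≤ s*t)
    (hσ : σ ∈ Set.Icc (0:ℝ) 1) : qf s t r σ ≤ (s+t)^2 := by
  have h1 : r ≤ s*t := le_trans (le_abs_self r) hr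
  have h2 : 2*r*σ ≤ 2*(s*t)*σ := by nlinarith [hσ.1]
  have hσ2 : σ^2 ≤ 1 := by nlinarith [hσ.1, hσ.2]
  have h3 : σ^2*t^2 ≤ 1*t^2 := mul_le_mul_of_nonneg_right hσ2 (sq_nonneg t)
  have h4 : 2*(s*t)*σ ≤ 2*(s*t) := by nlinarith [hσ.1, hσ.2, mul_nonneg hs ht]
  unfold qf; nlinarith

lemma sq_le_qf (s t r σ : ℝ) (hr : -(s*t) ≤ r) (hσ : 0 ≤ σ) :
    (s - σ*t)^2 ≤ qf s t r σ := by
  have key : qf s t r σ = (s - σ*t)^2 + 2*σ*(r + s*t) := by unfold qf; ring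
  nlinarith

lemma rpow_self_le_max (p s u : ℝ) (hp : 1 < p) (hu : 0 < u) (hq : 0 < s)
    (hlow : (u/6)^2 ≤ s) (hhigh : s ≤ u^2) :
    min 1 ((6:ℝ)^(2-p)) * u^(p-2) ≤ s ^ (p/2 - 1) := by
  have hu6 : (0:ℝ) < u/6 := by linarith
  rcases le_or_gt 2 p with h2p | h2p
  · have : ((u/6)^2) ^ (p/2-1) ≤ s ^ (p/2-1) :=
      Real.rpow_le_rpow (sq_nonneg _) hlow (by linarith)
    rw [sq_rpow _ hu6.le, show 2*(p/2-1) = p-2 by ring, Real.div_rpow hu.le (by norm_num)] at this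
    calc min 1 ((6:ℝ)^(2-p)) * u^(p-2) ≤ (6:ℝ)^(2-p) * u^(p-2) :=
          mul_le_mul_of_nonneg_right (min_le_right _ _) (Real.rpow_nonneg hu.le _)
      _ = u^(p-2) / (6:ℝ)^(p-2) := by
          rw [show (2-p) = -(p-2) by ring, Real.rpow_neg (by norm_num : (0:ℝ) ≤ 6)]
          ring
      _ ≤ s ^ (p/2-1) := this
  · have : (u^2) ^ (p/2-1) ≤ s ^ (p/2-1) :=
      Real.rpow_le_rpow_of_nonpos hq hhigh (by linarith)
    rw [sq_rpow _ hu.le, show 2*(p/2-1) = p-2 by ring] at this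
    calc min 1 ((6:ℝ)^(2-p)) * u^(p-2) ≤ 1 * u^(p-2) :=
          mul_le_mul_of_nonneg_right (min_le_left _ _) (Real.rpow_nonneg hu.le _)
      _ = u^(p-2) := one_mul _
      _ ≤ s ^ (p/2-1) := this

lemma rpow_le_max (p s u : ℝ) (hp : 1 < p) (hu : 0 < u) (hq : 0 < s)
    (hlow : (u/3)^2 ≤ s) (hhigh : s ≤ u^2) :
    s ^ (p/2 - 1) ≤ max 1 ((3:ℝ)^(2-p)) * u^(p-2) := by
  have hu3 : (0:ℝ) < u/3 := by linarith
  rcases le_or_gt 2 p with h2p | h2p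
  · have : s ^ (p/2-1) ≤ (u^2) ^ (p/2-1) :=
      Real.rpow_le_rpow hq.le hhigh (by linarith)
    rw [sq_rpow _ hu.le, show 2*(p/2-1) = p-2 by ring] at this
    calc s ^ (p/2-1) ≤ u^(p-2) := this
      _ = 1 * u^(p-2) := (one_mul _).symm
      _ ≤ max 1 ((3:ℝ)^(2-p)) * u^(p-2) :=
          mul_le_mul_of_nonneg_right (le_max_left _ _) (Real.rpow_nonneg hu.le _)
  · have h0 : (0:ℝ) < (u/3)^2 := by positivity
    have : s ^ (p/2-1) ≤ ((u/3)^2) ^ (p/2-1) :=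
      Real.rpow_le_rpow_of_nonpos h0 hlow (by linarith)
    rw [sq_rpow _ hu3.le, show 2*(p/2-1) = p-2 by ring, Real.div_rpow hu.le (by norm_num)] at this
    calc s ^ (p/2-1) ≤ u^(p-2) / (3:ℝ)^(p-2) := this
      _ = (3:ℝ)^(2-p) * u^(p-2) := by
          rw [show (2-p) = -(p-2) by ring, Real.rpow_neg (by norm_num : (0:ℝ) ≤ 3)]
          ring
      _ ≤ max 1 ((3:ℝ)^(2-p)) * u^(p-2) :=
          mul_le_mul_of_nonneg_right (le_max_right _ _) (Real.rpow_nonneg hu.le _)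

/-- Upper scalar bound. -/
lemma scalar_upper (p : ℝ) (hp : 1 < p) (s t r : ℝ) (hs : 0 ≤ s) (ht : 0 ≤ t)
    (hr : |r| ≤ s*t) :
    Nfun p s t r ≤ (max (9+3*p) (p * max 1 (p-1) * max 1 ((3:ℝ)^(2-p)) / 2))
      * (t^2 * (s+t)^(p-2)) := by
  set CC := max (9+3*p) (p * max 1 (p-1) * max 1 ((3:ℝ)^(2-p)) / 2) with hCC
  have hp0 : (0:ℝ) < p := by linarith
  have hrst : r ≤ s*t := le_trans (le_abs_self r) hr
  have hrst' : -(s*t) ≤ r := neg_le_of_abs_le hr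
  rcases eq_or_lt_of_le ht with ht0 | ht0
  · -- t = 0
    have hteq : t = 0 := ht0.symm
    have hr0 : r = 0 := by
      rw [hteq] at hr; simpa using hr
    rw [Nfun, hteq, hr0]
    rw [show s^2 + 2*0 + 0^2 = s^2 by ring, sq_rpow s hs, show 2*(p/2) = p by ring]
    simp
  rcases le_or_gt s (2*t) with hcase | hcase
  · -- crude regime s ≤ 2t
    have hst : 0 < s + t := by linarith
    have hq0 : 0 ≤ s^2 + 2*r + t^2 := by nlinarith [hrst', sq_nonneg (s-t)]
    have b1 : (s^2 + 2*r + t^2) ^ (p/2) ≤ (s+t)^p := by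
      have h1 : s^2 + 2*r + t^2 ≤ (s+t)^2 := by nlinarith
      have := Real.rpow_le_rpow hq0 h1 (by linarith : (0:ℝ) ≤ p/2)
      rwa [sq_rpow _ hst.le, show 2*(p/2) = p by ring] at this
    have hsp : 0 ≤ s^p := Real.rpow_nonneg hs p
    have b2 : - (p * s^(p-2) * r) ≤ p * s^(p-1) * t := by
      have h1 : -(p * s^(p-2) * r) ≤ p * s^(p-2) * (s*t) := by
        have := mul_le_mul_of_nonneg_left hrst'
          (mul_nonneg hp0.le (Real.rpow_nonneg hs (p-2)))
        nlinarith [this]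
      have h2 : s^(p-2) * (s*t) = s^(p-1) * t := by
        rw [← mul_assoc, show p - 2 = (p-1) - 1 by ring, rpow_sub_one_mul s hs (p-1) (by linarith)]
      calc -(p * s^(p-2) * r) ≤ p * s^(p-2) * (s*t) := h1
        _ = p * (s^(p-2) * (s*t)) := by ring
        _ = p * (s^(p-1) * t) := by rw [h2]
        _ = p * s^(p-1) * t := by ring
    have hE : 0 ≤ (s+t)^(p-2) := Real.rpow_nonneg hst.le _
    have b3 : (s+t)^p ≤ 9 * (t^2 * (s+t)^(p-2)) := by
      have h1 : (s+t)^p = (s+t)^2 * (s+t)^(p-2) := by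
        rw [show p = 2 + (p-2) by ring, Real.rpow_add hst, ← Real.rpow_natCast (s+t) 2]
        norm_num
      have h2 : (s+t)^2 ≤ 9 * t^2 := by nlinarith
      calc (s+t)^p = (s+t)^2 * (s+t)^(p-2) := h1
        _ ≤ (9*t^2) * (s+t)^(p-2) := mul_le_mul_of_nonneg_right h2 hE
        _ = 9 * (t^2 * (s+t)^(p-2)) := by ring
    have b4 : p * s^(p-1) * t ≤ 3 * p * (t^2 * (s+t)^(p-2)) := by
      have h1 : s^(p-1) ≤ (s+t)^(p-1) :=
        Real.rpow_le_rpow hs (by linarith) (by linarith)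
      have h2 : (s+t)^(p-1) = (s+t) * (s+t)^(p-2) := by
        rw [show p - 1 = 1 + (p-2) by ring, Real.rpow_add hst, Real.rpow_one]
      have h3 : s^(p-1) * t ≤ ((s+t) * (s+t)^(p-2)) * t := by
        apply mul_le_mul_of_nonneg_right _ ht
        rw [← h2]; exact h1
      have h4 : ((s+t) * (s+t)^(p-2)) * t ≤ ((3*t) * (s+t)^(p-2)) * t :=
        mul_le_mul_of_nonneg_right
          (mul_le_mul_of_nonneg_right (by linarith : s+t ≤ 3*t) hE) ht
      have h5 := mul_le_mul_of_nonneg_left (h3.trans h4) hp0.le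
      calc p * s^(p-1) * t = p * (s^(p-1) * t) := by ring
        _ ≤ p * (((3*t) * (s+t)^(p-2)) * t) := h5
        _ = 3 * p * (t^2 * (s+t)^(p-2)) := by ring
    have hfin : Nfun p s t r ≤ (9 + 3*p) * (t^2 * (s+t)^(p-2)) := by
      rw [Nfun]; linarith
    have hCCge : (9+3*p) ≤ CC := le_max_left _ _
    have hpos : 0 ≤ t^2 * (s+t)^(p-2) := mul_nonneg (sq_nonneg t) hE
    have := mul_le_mul_of_nonneg_right hCCge hpos
    linarith
  · -- FTC regime 2t < s
    have hst : 0 < s + t := by nlinarith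
    have hs0 : 0 < s := by linarith
    have hq : ∀ σ ∈ Set.Icc (0:ℝ) 1, 0 < qf s t r σ := by
      intro σ hσ
      have h1 : (s - σ*t)^2 ≤ qf s t r σ := sq_le_qf s t r σ hrst' hσ.1
      have h2 : 0 < s - σ*t := by nlinarith [hσ.2, hσ.1]
      nlinarith
    have hB : ∀ σ ∈ Set.Icc (0:ℝ) 1, (qf s t r σ) ^ (p/2-1)
        ≤ max 1 ((3:ℝ)^(2-p)) * (s+t)^(p-2) := by
      intro σ hσ
      apply rpow_le_max p _ _ hp hst (hq σ hσ)
      · have h2 : (s+t)/3 ≤ s - σ*t := by nlinarith [hσ.2, hσ.1]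
        have h3 : (0:ℝ) ≤ (s+t)/3 := by linarith
        calc ((s+t)/3)^2 ≤ (s - σ*t)^2 := by nlinarith
          _ ≤ qf s t r σ := sq_le_qf s t r σ hrst' hσ.1
      · exact qf_le_sq s t r σ hs ht hr hσ
    have := core_upper p s t r hp hs ht hr hq _ hB
    rw [← Nfun_eq p s t r hs] at this
    have hgoal : p * max 1 (p-1) * t^2 * (max 1 ((3:ℝ)^(2-p)) * (s+t)^(p-2)) / 2
        ≤ CC * (t^2 * (s+t)^(p-2)) := by
      have h1 : p * max 1 (p-1) * max 1 ((3:ℝ)^(2-p)) / 2 ≤ CC := le_max_right _ _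
      have hpos : 0 ≤ t^2 * (s+t)^(p-2) :=
        mul_nonneg (sq_nonneg t) (Real.rpow_nonneg hst.le _)
      calc p * max 1 (p-1) * t^2 * (max 1 ((3:ℝ)^(2-p)) * (s+t)^(p-2)) / 2
          = (p * max 1 (p-1) * max 1 ((3:ℝ)^(2-p)) / 2) * (t^2 * (s+t)^(p-2)) := by ring
        _ ≤ CC * (t^2 * (s+t)^(p-2)) := mul_le_mul_of_nonneg_right h1 hpos
    linarith

/-- Lower scalar bound, nondegenerate case `0 < s`, `0 < t`, `|r| < s t`. -/
lemma lower_main (p : ℝ) (hp : 1 < p) (s t r : ℝ) (hs : 0 < s) (ht : 0 < t)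
    (hr : |r| < s*t) :
    (1/64) * (p * min 1 (p-1) * min 1 ((6:ℝ)^(2-p))) * (t^2 * (s+t)^(p-2))
      ≤ Nfun p s t r := by
  have hst : 0 < s + t := by linarith
  have hrle : |r| ≤ s*t := hr.le
  have hrst : r ≤ s*t := le_trans (le_abs_self r) hrle
  have hrst' : -(s*t) < r := neg_lt_of_abs_lt hr
  have hq : ∀ σ ∈ Set.Icc (0:ℝ) 1, 0 < qf s t r σ := by
    intro σ hσ
    have key : qf s t r σ = (s - σ*t)^2 + 2*σ*(r + s*t) := by unfold qf; ring
    rcases eq_or_lt_of_le hσ.1 with h0 | h0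
    · rw [key, ← h0]; nlinarith
    · rw [key]; nlinarith [sq_nonneg (s - σ*t)]
  have hX0 : 0 ≤ p * min 1 (p-1) * t^2 *
      (min 1 ((6:ℝ)^(2-p)) * (s+t)^(p-2)) := by
    apply mul_nonneg
    apply mul_nonneg (mul_nonneg (by linarith) (le_min zero_le_one (by linarith)))
      (sq_nonneg t)
    exact mul_nonneg (le_min zero_le_one (Real.rpow_nonneg (by norm_num) _))
      (Real.rpow_nonneg hst.le _)
  rw [Nfun_eq p s t r hs.le]
  rcases le_or_gt (t/2) s with hcase | hcase
  · -- regime I : t/2 ≤ s, interval [0, 1/4]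
    have hB : ∀ σ ∈ Set.Icc (0:ℝ) (1/4),
        min 1 ((6:ℝ)^(2-p)) * (s+t)^(p-2) ≤ (qf s t r σ) ^ (p/2-1) := by
      intro σ hσ
      have hσ1 : σ ∈ Set.Icc (0:ℝ) 1 := ⟨hσ.1, by linarith [hσ.2]⟩
      apply rpow_self_le_max p _ _ hp hst (hq σ hσ1)
      · have h2 : (s+t)/6 ≤ s - σ*t := by nlinarith [hσ.1, hσ.2]
        have h3 : (0:ℝ) ≤ (s+t)/6 := by linarith
        calc ((s+t)/6)^2 ≤ (s - σ*t)^2 := by nlinarith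
          _ ≤ qf s t r σ := sq_le_qf s t r σ hrst'.le hσ.1
      · exact qf_le_sq s t r σ hs.le ht.le hrle hσ1
    have := core_lower p s t r hp hs.le ht.le hrle hq 0 (1/4)
      (min 1 ((6:ℝ)^(2-p)) * (s+t)^(p-2)) (le_refl 0) (by norm_num) (by norm_num)
      (mul_nonneg (le_min zero_le_one (Real.rpow_nonneg (by norm_num) _))
        (Real.rpow_nonneg hst.le _)) hB
    calc (1/64) * (p * min 1 (p-1) * min 1 ((6:ℝ)^(2-p))) * (t^2 * (s+t)^(p-2))
        = (1/64) * (p * min 1 (p-1) * t^2 * (min 1 ((6:ℝ)^(2-p)) * (s+t)^(p-2))) := by ring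
      _ ≤ (1 - 1/4) * ((1/4 - 0) * (p * min 1 (p-1) * t^2 *
            (min 1 ((6:ℝ)^(2-p)) * (s+t)^(p-2)))) := by nlinarith [hX0]
      _ ≤ _ := this
  · -- regime II : s < t/2, interval [3/4, 7/8]
    have hB : ∀ σ ∈ Set.Icc (3/4 : ℝ) (7/8),
        min 1 ((6:ℝ)^(2-p)) * (s+t)^(p-2) ≤ (qf s t r σ) ^ (p/2-1) := by
      intro σ hσ
      have hσ1 : σ ∈ Set.Icc (0:ℝ) 1 := ⟨by linarith [hσ.1], by linarith [hσ.2]⟩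
      apply rpow_self_le_max p _ _ hp hst (hq σ hσ1)
      · have h2 : (s+t)/6 ≤ σ*t - s := by nlinarith [hσ.1, hσ.2]
        have h3 : (0:ℝ) ≤ (s+t)/6 := by linarith
        calc ((s+t)/6)^2 ≤ (σ*t - s)^2 := by nlinarith
          _ = (s - σ*t)^2 := by ring
          _ ≤ qf s t r σ := sq_le_qf s t r σ hrst'.le hσ1.1
      · exact qf_le_sq s t r σ hs.le ht.le hrle hσ1
    have := core_lower p s t r hp hs.le ht.le hrle hq (3/4) (7/8)
      (min 1 ((6:ℝ)^(2-p)) * (s+t)^(p-2)) (by norm_num) (by norm_num) (by norm_num)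
      (mul_nonneg (le_min zero_le_one (Real.rpow_nonneg (by norm_num) _))
        (Real.rpow_nonneg hst.le _)) hB
    calc (1/64) * (p * min 1 (p-1) * min 1 ((6:ℝ)^(2-p))) * (t^2 * (s+t)^(p-2))
        = (1 - 7/8) * ((7/8 - 3/4) * (p * min 1 (p-1) * t^2 *
            (min 1 ((6:ℝ)^(2-p)) * (s+t)^(p-2)))) := by ring
      _ ≤ _ := this

/-- Lower scalar bound, general case. -/
lemma scalar_lower (p : ℝ) (hp : 1 < p) (s t r : ℝ) (hs : 0 ≤ s) (ht : 0 ≤ t)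
    (hr : |r| ≤ s*t) :
    (min 1 ((1/64) * (p * min 1 (p-1) * min 1 ((6:ℝ)^(2-p))))) * (t^2 * (s+t)^(p-2))
      ≤ Nfun p s t r := by
  set c := min 1 ((1/64) * (p * min 1 (p-1) * min 1 ((6:ℝ)^(2-p)))) with hc
  have hc1 : c ≤ 1 := min_le_left _ _
  have hc0 : 0 ≤ c := by
    apply le_min zero_le_one
    apply mul_nonneg (by norm_num)
    exact mul_nonneg (mul_nonneg (by linarith) (le_min zero_le_one (by linarith)))
      (le_min zero_le_one (Real.rpow_nonneg (by norm_num) _))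
  rcases eq_or_lt_of_le ht with ht0 | ht0
  · -- t = 0
    have hteq : t = 0 := ht0.symm
    have hr0 : r = 0 := by rw [hteq] at hr; simpa using hr
    rw [Nfun, hteq, hr0]
    rw [show s^2 + 2*0 + 0^2 = s^2 by ring, sq_rpow s hs, show 2*(p/2) = p by ring]
    simp
  rcases eq_or_lt_of_le hs with hs0 | hs0
  · -- s = 0
    have hseq : s = 0 := hs0.symm
    have hr0 : r = 0 := by rw [hseq] at hr; simpa using hr
    rw [Nfun, hseq, hr0]
    have h1 : (0:ℝ)^2 + 2*0 + t^2 = t^2 := by ring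
    rw [h1, sq_rpow t ht, show 2*(p/2) = p by ring,
      Real.zero_rpow (by linarith : p ≠ 0)]
    have h2 : t^2 * (0+t)^(p-2) = t^p := by
      rw [zero_add, ← Real.rpow_natCast t 2, ← Real.rpow_add ht0]
      norm_num
    rw [h2]
    have h3 : 0 ≤ t^p := Real.rpow_nonneg ht p
    nlinarith
  · -- 0 < s, 0 < t : limit argument
    have hklim : Filter.Tendsto (fun k : ℕ => s + 1/(k+1)) Filter.atTop (nhds s) := by
      have := tendsto_one_div_add_atTop_nhds_zero_nat (𝕜 := ℝ)
      have h2 := Filter.Tendsto.const_add s this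
      simpa using h2
    set c' := (1/64) * (p * min 1 (p-1) * min 1 ((6:ℝ)^(2-p))) with hc'
    have step : ∀ k : ℕ, c' * (t^2 * ((s + 1/(k+1)) + t)^(p-2))
        ≤ Nfun p (s + 1/(k+1)) t r := by
      intro k
      have hkpos : (0:ℝ) < 1/(k+1) := by positivity
      apply lower_main p hp _ t r (by linarith) ht0
      calc |r| ≤ s*t := hr
        _ < (s + 1/(k+1))*t := by nlinarith
    have hT1 : Filter.Tendsto (fun k : ℕ => c' * (t^2 * ((s + 1/(k+1)) + t)^(p-2)))
        Filter.atTop (nhds (c' * (t^2 * (s+t)^(p-2)))) := by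
      apply Filter.Tendsto.const_mul
      apply Filter.Tendsto.const_mul
      exact (hklim.add_const t).rpow_const (Or.inl (by positivity))
    have hT2 : Filter.Tendsto (fun k : ℕ => Nfun p (s + 1/(k+1)) t r)
        Filter.atTop (nhds (Nfun p s t r)) := by
      unfold Nfun
      apply Filter.Tendsto.sub
      apply Filter.Tendsto.sub
      · exact (((hklim.pow 2).add_const (2*r)).add_const (t^2)).rpow_const
          (Or.inr (by linarith : (0:ℝ) ≤ p/2))
      · exact hklim.rpow_const (Or.inl hs0.ne')
      · exact ((hklim.rpow_const (Or.inl hs0.ne')).const_mul p).mul_const r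
    have hfin : c' * (t^2 * (s+t)^(p-2)) ≤ Nfun p s t r :=
      le_of_tendsto_of_tendsto' hT1 hT2 step
    have hcc' : c ≤ c' := min_le_right _ _
    have hpos : 0 ≤ t^2 * (s+t)^(p-2) :=
      mul_nonneg (sq_nonneg t) (Real.rpow_nonneg (by linarith) _)
    have := mul_le_mul_of_nonneg_right hcc' hpos
    linarith


variable {m : ℕ}

lemma matQ_nonneg {A : Matrix (Fin m) (Fin m) ℝ} (hA : A.PosSemidef) (ξ : Fin m → ℝ) :
    0 ≤ matQ A ξ := by
  have := hA.dotProduct_mulVec_nonneg ξ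
  simpa [matQ, dotProduct_comm] using this

lemma cross_symm {A : Matrix (Fin m) (Fin m) ℝ} (hA : A.PosSemidef) (a b : Fin m → ℝ) :
    A.mulVec a ⬝ᵥ b = A.mulVec b ⬝ᵥ a := by
  have hAT : Aᵀ = A := by simpa using hA.1.eq
  rw [dotProduct_comm, Matrix.dotProduct_mulVec, ← Matrix.mulVec_transpose, hAT]

lemma matQ_add {A : Matrix (Fin m) (Fin m) ℝ} (hA : A.PosSemidef) (a b : Fin m → ℝ) :
    matQ A (a + b) = matQ A a + 2 * (A.mulVec a ⬝ᵥ b) + matQ A b := by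
  have h := cross_symm hA a b
  simp only [matQ, Matrix.mulVec_add, add_dotProduct, dotProduct_add]
  rw [show A.mulVec b ⬝ᵥ a = A.mulVec a ⬝ᵥ b from (cross_symm hA b a).trans rfl]
  · ring
  
lemma matQ_expand {A : Matrix (Fin m) (Fin m) ℝ} (hA : A.PosSemidef) (a b : Fin m → ℝ)
    (x : ℝ) : matQ A (a + x • b)
      = matQ A b * (x*x) + (2 * (A.mulVec a ⬝ᵥ b)) * x + matQ A a := by
  have h := cross_symm hA a b
  simp only [matQ, Matrix.mulVec_add, add_dotProduct, dotProduct_add,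
    Matrix.mulVec_smul, smul_dotProduct, dotProduct_smul, smul_eq_mul]
  rw [show A.mulVec b ⬝ᵥ a = A.mulVec a ⬝ᵥ b from (cross_symm hA b a).trans rfl]
  ring

lemma matCS {A : Matrix (Fin m) (Fin m) ℝ} (hA : A.PosSemidef) (a b : Fin m → ℝ) :
    |A.mulVec a ⬝ᵥ b| ≤ matNorm A a * matNorm A b := by
  have hqa := matQ_nonneg hA a
  have hqb := matQ_nonneg hA b
  have hquad : ∀ x : ℝ, 0 ≤ matQ A b * (x*x) + (2 * (A.mulVec a ⬝ᵥ b)) * x + matQ A a := by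
    intro x
    rw [← matQ_expand hA a b x]
    exact matQ_nonneg hA _
  have hd := discrim_le_zero hquad
  rw [discrim] at hd
  have hsq : (A.mulVec a ⬝ᵥ b)^2 ≤ matQ A a * matQ A b := by nlinarith
  calc |A.mulVec a ⬝ᵥ b| = Real.sqrt ((A.mulVec a ⬝ᵥ b)^2) := (Real.sqrt_sq_eq_abs _).symm
    _ ≤ Real.sqrt (matQ A a * matQ A b) := Real.sqrt_le_sqrt hsq
    _ = matNorm A a * matNorm A b := by rw [Real.sqrt_mul hqa]; rfl

lemma matNorm_sq {A : Matrix (Fin m) (Fin m) ℝ} (hA : A.PosSemidef) (ξ : Fin m → ℝ) :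
    matNorm A ξ ^ 2 = matQ A ξ := Real.sq_sqrt (matQ_nonneg hA ξ)

lemma matNorm_rpow {A : Matrix (Fin m) (Fin m) ℝ} (hA : A.PosSemidef) (ξ : Fin m → ℝ)
    (e : ℝ) : matNorm A ξ ^ e = matQ A ξ ^ (e/2) := by
  rw [matNorm, Real.sqrt_eq_rpow, ← Real.rpow_mul (matQ_nonneg hA ξ),
    show 1/2 * e = e/2 by ring]


end EnergyAux
end

/-- The key algebraic estimate behind the simplified energy: for every `1 < p < ∞` there are
constants `c, C > 0` (depending only on `p`) such that for every dimension `n ≥ 1`, every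
symmetric positive semidefinite matrix `A` and all vectors `a, b`,
`c |b|_A² (|a|_A + |b|_A)^{p−2} ≤ |a+b|_A^p − |a|_A^p − p|a|_A^{p−2}⟨Aa,b⟩
  ≤ C |b|_A² (|a|_A + |b|_A)^{p−2}`. -/
theorem energy_equivalence_estimate (p : ℝ) (hp : 1 < p) :
    ∃ c > (0:ℝ), ∃ C > (0:ℝ), ∀ n : ℕ, 1 ≤ n →
      ∀ A : Matrix (Fin n) (Fin n) ℝ, A.PosSemidef →
        ∀ a b : Fin n → ℝ,
          c * (matNorm A b ^ 2 * (matNorm A a + matNorm A b) ^ (p - 2)) ≤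
              matNorm A (a + b) ^ p - matNorm A a ^ p -
                p * matNorm A a ^ (p - 2) * (A.mulVec a ⬝ᵥ b) ∧
          matNorm A (a + b) ^ p - matNorm A a ^ p -
              p * matNorm A a ^ (p - 2) * (A.mulVec a ⬝ᵥ b) ≤
            C * (matNorm A b ^ 2 * (matNorm A a + matNorm A b) ^ (p - 2)) := by
  refine ⟨min 1 ((1/64) * (p * min 1 (p-1) * min 1 ((6:ℝ)^(2-p)))), ?_,
    max (9+3*p) (p * max 1 (p-1) * max 1 ((3:ℝ)^(2-p)) / 2), ?_, ?_⟩
  · apply lt_min one_pos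
    have h1 : (0:ℝ) < p := by linarith
    have h2 : (0:ℝ) < min 1 (p-1) := lt_min one_pos (by linarith)
    have h3 : (0:ℝ) < min 1 ((6:ℝ)^(2-p)) :=
      lt_min one_pos (Real.rpow_pos_of_pos (by norm_num) _)
    have := mul_pos (mul_pos h1 h2) h3
    linarith
  · exact lt_of_lt_of_le (by linarith) (le_max_left _ _)
  · intro n _ A hA a b
    have hr := EnergyAux.matCS hA a b
    have hs : 0 ≤ matNorm A a := Real.sqrt_nonneg _
    have ht : 0 ≤ matNorm A b := Real.sqrt_nonneg _
    have hmid : matNorm A (a+b) ^ p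
        = (matNorm A a ^ 2 + 2*(A.mulVec a ⬝ᵥ b) + matNorm A b ^ 2) ^ (p/2) := by
      rw [EnergyAux.matNorm_rpow hA (a+b) p, EnergyAux.matQ_add hA a b,
        EnergyAux.matNorm_sq hA a, EnergyAux.matNorm_sq hA b]
    constructor
    · have h := EnergyAux.scalar_lower p hp (matNorm A a) (matNorm A b)
        (A.mulVec a ⬝ᵥ b) hs ht hr
      rw [EnergyAux.Nfun] at h
      rw [hmid]
      exact h
    · have h := EnergyAux.scalar_upper p hp (matNorm A a) (matNorm A b)
        (A.mulVec a ⬝ᵥ b) hs ht hr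
      rw [EnergyAux.Nfun] at h
      rw [hmid]
      exact h


end
end

section
/- Let Ω ⊆ ℝⁿ be a domain, A : Ω → ℝ^{n×n} symmetric, measurable and locally uniformly positive definite, and V ∈ L^∞_loc(Ω). For a nonempty open set B compactly contained in Ω, let c_B := inf { Q_{A,V}(φ) : φ ∈ C_c^∞(Ω), ∫_B |φ|^p dx = 1 }. If c_B > 0 for every nonempty open set B compactly contained in Ω, then there exists a continuous positive function W on Ω such that Q_{A,V}(φ) ≥ ∫_Ω W(x)|φ(x)|^p dx for every φ ∈ C_c^∞(Ω). -/
open MeasureTheory Matrix Filter Topology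

noncomputable section

variable {n : ℕ}

/-- If `c_B > 0` for every nonempty open `B ⋐ Ω`, then there is a continuous positive weight
`W` on `Ω` with `Q_{A,V}(φ) ≥ ∫_Ω W |φ|^p dx` for all `φ ∈ C_c^∞(Ω)`. -/
theorem exists_weight_of_cB_pos
    (n : ℕ) (hn : 2 ≤ n) (p : ℝ) (hp : 1 < p)
    (Ω : Set (Fin n → ℝ)) (hΩo : IsOpen Ω) (hΩc : IsConnected Ω)
    (A : (Fin n → ℝ) → Matrix (Fin n) (Fin n) ℝ) (hAmeas : MeasurableMat A)
    (hA : LocUnifPD Ω A)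
    (V : (Fin n → ℝ) → ℝ) (hV : LinfLoc Ω V)
    (hcB : ∀ B : Set (Fin n → ℝ), IsOpen B → B.Nonempty → IsCompact (closure B) →
        closure B ⊆ Ω →
      ∃ c > (0:ℝ), ∀ φ : (Fin n → ℝ) → ℝ, IsTest Ω φ →
        (∫ x in B, |φ x| ^ p) = 1 → c ≤ QForm p Ω A V φ) :
    ∃ W : (Fin n → ℝ) → ℝ, ContinuousOn W Ω ∧ (∀ x ∈ Ω, 0 < W x) ∧
      ∀ φ : (Fin n → ℝ) → ℝ, IsTest Ω φ →
        (∫ x in Ω, W x * |φ x| ^ p) ≤ QForm p Ω A V φ := by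
  classical
  have hp0 : (0:ℝ) < p := lt_trans one_pos hp
  have hpne : p ≠ 0 := ne_of_gt hp0
  have hΩne : Ω.Nonempty := hΩc.nonempty
  -- choose radii
  have hrad : ∀ z : (Fin n → ℝ), z ∈ Ω → ∃ ρ : ℝ, 0 < ρ ∧ Metric.closedBall z (2*ρ) ⊆ Ω := by
    intro z hz
    obtain ⟨ε, hε, hball⟩ := Metric.isOpen_iff.mp hΩo z hz
    refine ⟨ε/4, by linarith, fun w hw => hball ?_⟩
    have hw' : dist w z ≤ 2 * (ε/4) := Metric.mem_closedBall.mp hw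
    exact Metric.mem_ball.mpr (by linarith)
  choose! rr hrrpos hrrsub using hrad
  obtain ⟨T, hTc, hTeq⟩ := TopologicalSpace.isOpen_iUnion_countable
    (fun z : Ω => Metric.ball (z : Fin n → ℝ) (rr z)) (fun z => Metric.isOpen_ball)
  have hTne : T.Nonempty := by
    obtain ⟨x0, hx0⟩ := hΩne
    have hx1 : x0 ∈ ⋃ z : Ω, Metric.ball (z : Fin n → ℝ) (rr z) :=
      Set.mem_iUnion.mpr ⟨⟨x0, hx0⟩, Metric.mem_ball_self (hrrpos x0 hx0)⟩
    rw [← hTeq] at hx1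
    obtain ⟨z, hz, -⟩ := Set.mem_iUnion₂.mp hx1
    exact ⟨z, hz⟩
  obtain ⟨e, he⟩ := hTc.exists_eq_range hTne
  set y : ℕ → (Fin n → ℝ) := fun j => ((e j : Ω) : Fin n → ℝ) with hy
  set r : ℕ → ℝ := fun j => rr (y j) with hr
  have hyΩ : ∀ j, y j ∈ Ω := fun j => (e j).2
  have hrpos : ∀ j, 0 < r j := fun j => hrrpos _ (hyΩ j)
  have hsub' : ∀ j, Metric.closedBall (y j) (2 * r j) ⊆ Ω := fun j => hrrsub _ (hyΩ j)
  have hcover : ∀ x ∈ Ω, ∃ j, x ∈ Metric.ball (y j) (r j) := by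
    intro x hx
    have hx1 : x ∈ ⋃ z : Ω, Metric.ball (z : Fin n → ℝ) (rr z) :=
      Set.mem_iUnion.mpr ⟨⟨x, hx⟩, Metric.mem_ball_self (hrrpos x hx)⟩
    rw [← hTeq] at hx1
    obtain ⟨z, hzT, hzb⟩ := Set.mem_iUnion₂.mp hx1
    rw [he] at hzT
    obtain ⟨j, hj⟩ := hzT
    refine ⟨j, ?_⟩
    show x ∈ Metric.ball ((e j : Fin n → ℝ)) (rr (e j))
    rw [hj]
    exact hzb
  set B : ℕ → Set (Fin n → ℝ) := fun j => Metric.ball (y j) (2 * r j) with hB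
  have hBsub : ∀ j, B j ⊆ Ω := fun j => Metric.ball_subset_closedBall.trans (hsub' j)
  have hc : ∀ j : ℕ, ∃ cc : ℝ, 0 < cc ∧ ∀ φ, IsTest Ω φ →
      (∫ x in B j, |φ x| ^ p) = 1 → cc ≤ QForm p Ω A V φ := by
    intro j
    have h2r : (2 * r j) ≠ 0 := by have := hrpos j; positivity
    have hcl : closure (B j) = Metric.closedBall (y j) (2 * r j) := closure_ball _ h2r
    obtain ⟨cc, hccpos, hccle⟩ := hcB (B j) Metric.isOpen_ball
      ⟨y j, Metric.mem_ball_self (by have := hrpos j; positivity)⟩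
      (by rw [hcl]; exact isCompact_closedBall _ _) (by rw [hcl]; exact hsub' j)
    exact ⟨cc, hccpos, hccle⟩
  choose c hcpos hcle using hc
  set c' : ℕ → ℝ := fun j => min (c j) 1 with hc'
  have hc'pos : ∀ j, 0 < c' j := fun j => lt_min (hcpos j) one_pos
  have hc'le1 : ∀ j, c' j ≤ 1 := fun j => min_le_right _ _
  have hc'lec : ∀ j, c' j ≤ c j := fun j => min_le_left _ _
  -- bumps
  set bump : ℕ → (Fin n → ℝ) → ℝ :=
    fun j x => c' j * max 0 (min 1 (2 - dist x (y j) / r j)) with hbump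
  have hbump_cont : ∀ j, Continuous (bump j) := by
    intro j
    exact continuous_const.mul (continuous_const.max (continuous_const.min
      (continuous_const.sub ((continuous_id.dist continuous_const).div_const (r j)))))
  have hbump_nonneg : ∀ j x, 0 ≤ bump j x :=
    fun j x => mul_nonneg (hc'pos j).le (le_max_left _ _)
  have hbump_le : ∀ j x, bump j x ≤ c' j := by
    intro j x
    have h1 : max 0 (min 1 (2 - dist x (y j) / r j)) ≤ 1 :=
      max_le zero_le_one (min_le_left _ _)
    calc bump j x ≤ c' j * 1 := mul_le_mul_of_nonneg_left h1 (hc'pos j).le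
      _ = c' j := mul_one _
  have hbump_le1 : ∀ j x, bump j x ≤ 1 := fun j x => (hbump_le j x).trans (hc'le1 j)
  have hbump_zero : ∀ j x, x ∉ B j → bump j x = 0 := by
    intro j x hx
    have hd : 2 * r j ≤ dist x (y j) := le_of_not_gt (fun h => hx (Metric.mem_ball.mpr h))
    have h2 : (2:ℝ) ≤ dist x (y j) / r j := (le_div_iff₀ (hrpos j)).mpr (by linarith)
    have h3 : min 1 (2 - dist x (y j) / r j) ≤ 0 :=
      (min_le_right _ _).trans (by linarith)
    rw [hbump]
    simp only [max_eq_left h3, mul_zero]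
  have hbump_one : ∀ j x, x ∈ Metric.ball (y j) (r j) → bump j x = c' j := by
    intro j x hx
    have hd : dist x (y j) < r j := Metric.mem_ball.mp hx
    have h1 : dist x (y j) / r j < 1 := (div_lt_one (hrpos j)).mpr hd
    have h2 : min 1 (2 - dist x (y j) / r j) = 1 := min_eq_left (by linarith)
    rw [hbump]
    simp only [h2, max_eq_right zero_le_one, mul_one]
  -- weights
  set u : ℕ → ℝ := fun j => (2⁻¹:ℝ)^(j+1) with hu
  have hu_pos : ∀ j, 0 < u j := fun j => pow_pos (by norm_num) _
  have hu_sum : Summable u := by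
    have h1 : u = fun j : ℕ => 2⁻¹ * (2⁻¹:ℝ)^j := by funext j; rw [hu]; ring
    rw [h1]
    exact (summable_geometric_of_lt_one (by norm_num) (by norm_num)).mul_left _
  have hu_tsum : ∑' j, u j = 1 := by
    have h1 : ∀ j : ℕ, u j = 2⁻¹ * (2⁻¹:ℝ)^j := by intro j; rw [hu]; ring
    calc ∑' j, u j = ∑' j : ℕ, 2⁻¹ * (2⁻¹:ℝ)^j := tsum_congr h1
      _ = 2⁻¹ * ∑' j : ℕ, (2⁻¹:ℝ)^j := tsum_mul_left
      _ = 2⁻¹ * (1 - 2⁻¹)⁻¹ := by rw [tsum_geometric_of_lt_one (by norm_num) (by norm_num)]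
      _ = 1 := by norm_num
  set W : (Fin n → ℝ) → ℝ := fun x => ∑' j, u j * bump j x with hW
  have hterm_norm : ∀ j x, ‖u j * bump j x‖ ≤ u j := by
    intro j x
    rw [Real.norm_eq_abs, abs_of_nonneg (mul_nonneg (hu_pos j).le (hbump_nonneg j x))]
    calc u j * bump j x ≤ u j * 1 := mul_le_mul_of_nonneg_left (hbump_le1 j x) (hu_pos j).le
      _ = u j := mul_one _
  have hWcont : Continuous W :=
    continuous_tsum (fun j => continuous_const.mul (hbump_cont j)) hu_sum hterm_norm
  have hWpos : ∀ x ∈ Ω, 0 < W x := by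
    intro x hx
    obtain ⟨j, hj⟩ := hcover x hx
    have hsumx : Summable (fun j => u j * bump j x) :=
      Summable.of_nonneg_of_le (fun i => mul_nonneg (hu_pos i).le (hbump_nonneg i x))
        (fun i => by
          calc u i * bump i x ≤ u i * 1 :=
              mul_le_mul_of_nonneg_left (hbump_le1 i x) (hu_pos i).le
            _ = u i := mul_one _) hu_sum
    refine Summable.tsum_pos hsumx (fun i => mul_nonneg (hu_pos i).le (hbump_nonneg i x)) j ?_
    rw [hbump_one j x hj]
    exact mul_pos (hu_pos j) (hc'pos j)
  -- the key scaling estimate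
  have key : ∀ φ, IsTest Ω φ → ∀ j, 0 < (∫ x in B j, |φ x| ^ p) →
      c j * (∫ x in B j, |φ x| ^ p) ≤ QForm p Ω A V φ := by
    intro φ hφ j ht
    set t : ℝ := ∫ x in B j, |φ x| ^ p with htdef
    set s : ℝ := t ^ (-p⁻¹) with hs
    have hspos : 0 < s := Real.rpow_pos_of_pos ht _
    have hsp : s ^ p = t⁻¹ := by
      rw [hs, ← Real.rpow_mul ht.le]
      rw [show (-p⁻¹) * p = -1 by field_simp]
      exact Real.rpow_neg_one t
    set ψ : (Fin n → ℝ) → ℝ := fun x => s * φ x with hψ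
    have hsuppψ : Function.support ψ ⊆ Function.support φ := by
      intro x hx
      simp only [hψ, Function.mem_support] at hx ⊢
      intro h0
      exact hx (by rw [h0, mul_zero])
    have hψtest : IsTest Ω ψ := by
      refine ⟨contDiff_const.mul hφ.1, hφ.2.1.mono hsuppψ, ?_⟩
      exact (closure_mono hsuppψ).trans hφ.2.2
    have hgrad : ∀ x, grad ψ x = s • grad φ x := by
      intro x
      funext i
      have hd : DifferentiableAt ℝ φ x := (hφ.1.differentiable (by simp)).differentiableAt
      simp only [grad, hψ, fderiv_const_mul hd s, ContinuousLinearMap.smul_apply,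
        Pi.smul_apply, smul_eq_mul]
    have h4 : ∀ x, |ψ x| ^ p = t⁻¹ * |φ x| ^ p := by
      intro x
      rw [hψ]
      simp only
      rw [abs_mul, abs_of_pos hspos, Real.mul_rpow hspos.le (abs_nonneg _), hsp]
    have hintegrand : ∀ x,
        matNorm (A x) (grad ψ x) ^ p + V x * |ψ x| ^ p
        = t⁻¹ * (matNorm (A x) (grad φ x) ^ p + V x * |φ x| ^ p) := by
      intro x
      have h1 : matQ (A x) (grad ψ x) = (s*s) * matQ (A x) (grad φ x) := by
        rw [hgrad x]
        simp only [matQ, Matrix.mulVec_smul, smul_dotProduct, dotProduct_smul, smul_eq_mul]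
        ring
      have h2 : matNorm (A x) (grad ψ x) = s * matNorm (A x) (grad φ x) := by
        simp only [matNorm, h1]
        rw [Real.sqrt_mul (mul_self_nonneg s), Real.sqrt_mul_self hspos.le]
      have h3 : matNorm (A x) (grad ψ x) ^ p = t⁻¹ * matNorm (A x) (grad φ x) ^ p := by
        have hmn : (0:ℝ) ≤ matNorm (A x) (grad φ x) := Real.sqrt_nonneg _
        rw [h2, Real.mul_rpow hspos.le hmn, hsp]
      rw [h3, h4 x]
      ring
    have hQψ : QForm p Ω A V ψ = t⁻¹ * QForm p Ω A V φ := by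
      unfold QForm
      simp only [hintegrand]
      exact integral_const_mul _ _
    have hψnorm : (∫ x in B j, |ψ x| ^ p) = 1 := by
      simp only [h4]
      rw [integral_const_mul, ← htdef]
      exact inv_mul_cancel₀ (ne_of_gt ht)
    have hle := hcle j ψ hψtest hψnorm
    rw [hQψ] at hle
    have h5 : c j * t ≤ (t⁻¹ * QForm p Ω A V φ) * t := mul_le_mul_of_nonneg_right hle ht.le
    rwa [inv_mul_eq_div, div_mul_cancel₀ _ (ne_of_gt ht)] at h5
  -- the main estimate
  refine ⟨W, hWcont.continuousOn, hWpos, ?_⟩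
  intro φ hφ
  set f : (Fin n → ℝ) → ℝ := fun x => |φ x| ^ p with hf
  have hf_nonneg : ∀ x, 0 ≤ f x := fun x => Real.rpow_nonneg (abs_nonneg _) p
  have hf_cont : Continuous f := (hφ.1.continuous.abs).rpow_const (fun x => Or.inr hp0.le)
  have hf_supp : HasCompactSupport f := by
    refine hφ.2.1.mono ?_
    intro x hx
    simp only [hf, Function.mem_support] at hx ⊢
    intro h0
    exact hx (by rw [h0, abs_zero, Real.zero_rpow hpne])
  have hf_int : Integrable f := hf_cont.integrable_of_hasCompactSupport hf_supp
  have hf_intΩ : Integrable f (volume.restrict Ω) := hf_int.restrict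
  have hI_nonneg : ∀ j, 0 ≤ ∫ x in B j, f x :=
    fun j => setIntegral_nonneg measurableSet_ball (fun x _ => hf_nonneg x)
  -- nonnegativity of Q
  have hQ0 : 0 ≤ QForm p Ω A V φ := by
    by_cases hex : ∃ j, 0 < ∫ x in B j, f x
    · obtain ⟨j, hj⟩ := hex
      exact le_trans (le_of_lt (mul_pos (hcpos j) hj)) (key φ hφ j hj)
    · push_neg at hex
      have hIzero : ∀ j, (∫ x in B j, f x) = 0 := fun j => le_antisymm (hex j) (hI_nonneg j)
      have hfz : ∀ j, ∀ x ∈ B j, f x = 0 := by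
        intro j x hx
        by_contra hfx
        have hsup_open : IsOpen (Function.support f ∩ B j) :=
          (hf_cont.isOpen_support).inter Metric.isOpen_ball
        have hne2 : (Function.support f ∩ B j).Nonempty := ⟨x, hfx, hx⟩
        have hpos := IsOpen.measure_pos volume hsup_open hne2
        have h2 : (volume.restrict (B j)) (Function.support f)
            = volume (Function.support f ∩ B j) :=
          Measure.restrict_apply (hf_cont.isOpen_support).measurableSet
        have h3 : 0 < (volume.restrict (B j)) (Function.support f) := by rw [h2]; exact hpos
        have h4 := (integral_pos_iff_support_of_nonneg hf_nonneg hf_int.restrict).mpr h3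
        rw [hIzero j] at h4
        exact lt_irrefl 0 h4
      have hφz : ∀ x, φ x = 0 := by
        intro x
        by_cases hxΩ : x ∈ Ω
        · obtain ⟨j, hj⟩ := hcover x hxΩ
          have hxB : x ∈ B j := Metric.ball_subset_ball (by linarith [hrpos j]) hj
          have hfx := hfz j x hxB
          simp only [hf] at hfx
          have habs : |φ x| = 0 := ((Real.rpow_eq_zero_iff_of_nonneg (abs_nonneg _)).mp hfx).1
          exact abs_eq_zero.mp habs
        · exact image_eq_zero_of_notMem_tsupport (fun h => hxΩ (hφ.2.2 h))
      have hφconst : φ = fun _ => (0:ℝ) := funext hφz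
      have hgz : ∀ x, grad φ x = 0 := by
        intro x
        funext i
        rw [hφconst]
        simp [grad, fderiv_const]
      have hzero : ∀ x, matNorm (A x) (grad φ x) ^ p + V x * |φ x| ^ p = 0 := by
        intro x
        rw [hgz x, hφz x]
        simp [matNorm, matQ, Real.zero_rpow hpne]
      unfold QForm
      simp only [hzero, integral_zero]
      exact le_refl 0
  set Q : ℝ := QForm p Ω A V φ with hQdef
  have hkey' : ∀ j, c' j * (∫ x in B j, f x) ≤ Q := by
    intro j
    rcases lt_or_eq_of_le (hI_nonneg j) with hpos | heq
    · calc c' j * (∫ x in B j, f x) ≤ c j * (∫ x in B j, f x) :=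
          mul_le_mul_of_nonneg_right (hc'lec j) (hI_nonneg j)
        _ ≤ Q := key φ hφ j hpos
    · rw [← heq, mul_zero]; exact hQ0
  set g : ℕ → (Fin n → ℝ) → ℝ := fun j x => u j * (bump j x * f x) with hg
  have hg_nonneg : ∀ j x, 0 ≤ g j x :=
    fun j x => mul_nonneg (hu_pos j).le (mul_nonneg (hbump_nonneg j x) (hf_nonneg x))
  have hg_cont : ∀ j, Continuous (g j) :=
    fun j => continuous_const.mul ((hbump_cont j).mul hf_cont)
  have hg_supp : ∀ j, HasCompactSupport (g j) := by
    intro j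
    refine hf_supp.mono ?_
    intro x hx
    simp only [hg, Function.mem_support] at hx ⊢
    intro h0
    exact hx (by rw [h0, mul_zero, mul_zero])
  have hg_int : ∀ j, Integrable (g j) (volume.restrict Ω) :=
    fun j => ((hg_cont j).integrable_of_hasCompactSupport (hg_supp j)).restrict
  have hg_le : ∀ j x, g j x ≤ u j * f x := by
    intro j x
    have h1 : bump j x * f x ≤ 1 * f x :=
      mul_le_mul_of_nonneg_right (hbump_le1 j x) (hf_nonneg x)
    rw [one_mul] at h1
    exact mul_le_mul_of_nonneg_left h1 (hu_pos j).le
  have hgint_le : ∀ j, (∫ x in Ω, g j x) ≤ u j * (c' j * ∫ x in B j, f x) := by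
    intro j
    have hint1 : Integrable (fun x => bump j x * f x) (volume.restrict Ω) :=
      (((hbump_cont j).mul hf_cont).integrable_of_hasCompactSupport
        (hf_supp.mono (by
          intro x hx
          simp only [Function.mem_support] at hx ⊢
          intro h0
          exact hx (by rw [Pi.mul_apply, h0, mul_zero])))).restrict
    have hint2 : Integrable ((B j).indicator (fun x => c' j * f x)) (volume.restrict Ω) :=
      (hf_intΩ.const_mul (c' j)).indicator measurableSet_ball
    have hmono : (∫ x in Ω, bump j x * f x)
        ≤ ∫ x in Ω, (B j).indicator (fun x => c' j * f x) x := by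
      refine integral_mono hint1 hint2 ?_
      intro x
      by_cases hx : x ∈ B j
      · rw [Set.indicator_of_mem hx]
        exact mul_le_mul_of_nonneg_right (hbump_le j x) (hf_nonneg x)
      · rw [Set.indicator_of_notMem hx]
        show bump j x * f x ≤ 0
        rw [hbump_zero j x hx, zero_mul]
    have hind : (∫ x in Ω, (B j).indicator (fun x => c' j * f x) x)
        = c' j * ∫ x in B j, f x := by
      rw [integral_indicator measurableSet_ball, Measure.restrict_restrict measurableSet_ball,
        Set.inter_eq_self_of_subset_left (hBsub j), integral_const_mul]
    calc (∫ x in Ω, g j x) = u j * ∫ x in Ω, bump j x * f x := integral_const_mul _ _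
      _ ≤ u j * (c' j * ∫ x in B j, f x) :=
          mul_le_mul_of_nonneg_left (hmono.trans (le_of_eq hind)) (hu_pos j).le
  have hgint_leQ : ∀ j, (∫ x in Ω, g j x) ≤ u j * Q :=
    fun j => (hgint_le j).trans (mul_le_mul_of_nonneg_left (hkey' j) (hu_pos j).le)
  have hgint_nonneg : ∀ j, 0 ≤ ∫ x in Ω, g j x :=
    fun j => setIntegral_nonneg hΩo.measurableSet (fun x _ => hg_nonneg j x)
  have hgint_leM : ∀ j, (∫ x in Ω, g j x) ≤ u j * ∫ x in Ω, f x := by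
    intro j
    rw [show (u j * ∫ x in Ω, f x) = ∫ x in Ω, u j * f x from (integral_const_mul _ _).symm]
    exact integral_mono (hg_int j) (hf_intΩ.const_mul _) (fun x => hg_le j x)
  have hsumg : Summable (fun j => ∫ x in Ω, g j x) :=
    Summable.of_nonneg_of_le hgint_nonneg hgint_leM (hu_sum.mul_right _)
  have hnorm_int : Summable (fun j => ∫ x in Ω, ‖g j x‖) := by
    have hcongr : ∀ j, (∫ x in Ω, ‖g j x‖) = ∫ x in Ω, g j x := by
      intro j
      refine integral_congr_ae (Filter.Eventually.of_forall (fun x => ?_))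
      exact Real.norm_of_nonneg (hg_nonneg j x)
    simpa only [hcongr] using hsumg
  have hswap := integral_tsum_of_summable_integral_norm (fun j => hg_int j) hnorm_int
  have hWf : ∀ x, W x * f x = ∑' j, g j x := by
    intro x
    rw [hW]
    simp only
    rw [← tsum_mul_right]
    exact tsum_congr (fun j => by rw [hg]; ring)
  calc (∫ x in Ω, W x * |φ x| ^ p) = ∫ x in Ω, ∑' j, g j x := by
        refine integral_congr_ae (Filter.Eventually.of_forall (fun x => ?_))
        exact hWf x
    _ = ∑' j, ∫ x in Ω, g j x := hswap.symm
    _ ≤ ∑' j, u j * Q := Summable.tsum_le_tsum hgint_leQ hsumg (hu_sum.mul_right Q)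
    _ = (∑' j, u j) * Q := tsum_mul_right
    _ = Q := by rw [hu_tsum, one_mul]


end
end
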